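/- arXiv:1204.6297 — 4 statements merged into one kernel-verified Lean document; each statement's English description precedes it below -/
import Mathlib

section
/- Let σ > 1/2, n ≥ 1, and for each k let c(k) be a complex number with |c(k)| ≤ 1. Then ∫₀¹ ∏_{m=1}^n (1 − c(m) e^{2πiθ_m} p_m^{−σ})^{-1} (1 − c̄(m) e^{−2πiθ_m} p_m^{−σ})^{-1} dθ_m, taken coordinatewise over the unit cube [0,1]^n, is bounded by a constant depending only on σ (not on n or the c(m)). -/
open MeasureTheory Real

lemma key1 (a : ℂ) (ha : ‖a‖ < 1) :
    ∫ θ in (0:ℝ)..(2*π),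
      (1 - a * Complex.exp (θ * Complex.I))⁻¹ *
        (1 - (starRingEnd ℂ) a * Complex.exp (-(θ * Complex.I)))⁻¹
    = 2 * π * ((1 - ‖a‖^2)⁻¹ : ℝ) := by
  have h0 : ∀ z ∈ Metric.closedBall (0:ℂ) 1, 1 - a * z ≠ 0 := by
    intro z hz h
    have hz1 : ‖z‖ ≤ 1 := by simpa using hz
    have : ‖a * z‖ < 1 := by
      calc ‖a * z‖ = ‖a‖ * ‖z‖ := norm_mul _ _
      _ ≤ ‖a‖ := by nlinarith [norm_nonneg a, norm_nonneg z]
      _ < 1 := ha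
    have h1 : a * z = 1 := by linear_combination -h
    rw [h1] at this; simp at this
  have hball : ∀ z ∈ Metric.ball (0:ℂ) 1, 1 - a * z ≠ 0 := fun z hz =>
    h0 z (Metric.ball_subset_closedBall hz)
  have hf : DiffContOnCl ℂ (fun z => (1 - a * z)⁻¹) (Metric.ball 0 1) := by
    constructor
    · exact (((differentiableOn_const _).sub ((differentiable_id.const_mul a).differentiableOn)).inv hball)
    · rw [closure_ball (0:ℂ) one_ne_zero]
      exact (((continuousOn_const).sub (continuous_const.mul continuous_id).continuousOn).inv₀ h0)
  have hw : (starRingEnd ℂ) a ∈ Metric.ball (0:ℂ) 1 := by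
    simpa [Complex.norm_conj] using ha
  have hc := hf.circleIntegral_sub_inv_smul hw
  rw [circleIntegral] at hc
  simp only [circleMap_zero, deriv_circleMap, smul_eq_mul, Complex.ofReal_one, one_mul] at hc
  have habs : ∀ θ : ℝ, ‖Complex.exp (θ * Complex.I)‖ = 1 := by
    intro θ; simp [Complex.norm_exp]
  have hne0 : ∀ θ : ℝ, 1 - a * Complex.exp (θ * Complex.I) ≠ 0 := by
    intro θ; refine h0 _ ?_; simp [Metric.mem_closedBall, Complex.dist_eq, habs θ]
  have hne1 : ∀ θ : ℝ, Complex.exp (θ * Complex.I) - (starRingEnd ℂ) a ≠ 0 := by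
    intro θ h
    have : ‖(starRingEnd ℂ) a‖ = 1 := by
      rw [← sub_eq_zero.mp h, habs θ]
    rw [Complex.norm_conj] at this
    linarith
  have hne2 : ∀ θ : ℝ, 1 - (starRingEnd ℂ) a * Complex.exp (-(θ * Complex.I)) ≠ 0 := by
    intro θ h
    have h1 : ‖(starRingEnd ℂ) a * Complex.exp (-(θ * Complex.I))‖ = 1 := by
      rw [← sub_eq_zero.mp h]; simp
    have h2 : ‖Complex.exp (-(θ * Complex.I))‖ = 1 := by
      have := habs (-θ); push_cast at this; rw [← this]; ring_nf
    rw [norm_mul, h2, mul_one, Complex.norm_conj] at h1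
    linarith
  have hpt : ∀ θ : ℝ,
      (1 - a * Complex.exp (θ * Complex.I))⁻¹ *
        (1 - (starRingEnd ℂ) a * Complex.exp (-(θ * Complex.I)))⁻¹
      = Complex.I⁻¹ * (Complex.exp (θ * Complex.I) * Complex.I *
          ((Complex.exp (θ * Complex.I) - (starRingEnd ℂ) a)⁻¹ *
            (1 - a * Complex.exp (θ * Complex.I))⁻¹)) := by
    intro θ
    rw [Complex.exp_neg]
    field_simp
  calc ∫ θ in (0:ℝ)..(2*π),
      (1 - a * Complex.exp (θ * Complex.I))⁻¹ *
        (1 - (starRingEnd ℂ) a * Complex.exp (-(θ * Complex.I)))⁻¹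
      = ∫ θ in (0:ℝ)..(2*π), Complex.I⁻¹ * (Complex.exp (θ * Complex.I) * Complex.I *
          ((Complex.exp (θ * Complex.I) - (starRingEnd ℂ) a)⁻¹ *
            (1 - a * Complex.exp (θ * Complex.I))⁻¹)) := by
        apply intervalIntegral.integral_congr; intro θ _; exact hpt θ
    _ = Complex.I⁻¹ * ∫ θ in (0:ℝ)..(2*π), Complex.exp (θ * Complex.I) * Complex.I *
          ((Complex.exp (θ * Complex.I) - (starRingEnd ℂ) a)⁻¹ *
            (1 - a * Complex.exp (θ * Complex.I))⁻¹) := by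
        rw [intervalIntegral.integral_const_mul]
    _ = Complex.I⁻¹ * (2 * ↑π * Complex.I * (1 - a * (starRingEnd ℂ) a)⁻¹) := by
        rw [hc]
    _ = 2 * π * ((1 - ‖a‖^2)⁻¹ : ℝ) := by
        rw [Complex.mul_conj, Complex.normSq_eq_norm_sq, Complex.inv_I]
        push_cast
        have h9 : -Complex.I * (2 * (π:ℂ) * Complex.I * ((1:ℂ) - (‖a‖:ℂ)^2)⁻¹)
            = -(Complex.I*Complex.I) * (2 * (π:ℂ) * ((1:ℂ) - (‖a‖:ℂ)^2)⁻¹) := by ring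
        rw [h9, Complex.I_mul_I]
        ring


lemma key2 (a : ℂ) (ha : ‖a‖ < 1) :
    ∫ θ in Set.Icc (0:ℝ) 1,
      (1 - a * Complex.exp (2 * π * Complex.I * θ))⁻¹ *
        (1 - (starRingEnd ℂ) a * Complex.exp (-(2 * π * Complex.I * θ)))⁻¹
    = ((1 - ‖a‖^2)⁻¹ : ℝ) := by
  have h2π : (2:ℝ) * π ≠ 0 := by positivity
  rw [MeasureTheory.integral_Icc_eq_integral_Ioc,
    ← intervalIntegral.integral_of_le (by norm_num : (0:ℝ) ≤ 1)]
  have hcongr : ∀ θ : ℝ,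
      (1 - a * Complex.exp (2 * π * Complex.I * θ))⁻¹ *
        (1 - (starRingEnd ℂ) a * Complex.exp (-(2 * π * Complex.I * θ)))⁻¹
      = (fun t : ℝ => (1 - a * Complex.exp (t * Complex.I))⁻¹ *
          (1 - (starRingEnd ℂ) a * Complex.exp (-(t * Complex.I)))⁻¹) (2 * π * θ) := by
    intro θ
    have h1 : ((2 * π * θ : ℝ) : ℂ) * Complex.I = 2 * π * Complex.I * θ := by
      push_cast; ring
    simp only [h1]
  calc (∫ θ in (0:ℝ)..1,
      (1 - a * Complex.exp (2 * π * Complex.I * θ))⁻¹ *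
        (1 - (starRingEnd ℂ) a * Complex.exp (-(2 * π * Complex.I * θ)))⁻¹)
      = ∫ θ in (0:ℝ)..1, (fun t : ℝ => (1 - a * Complex.exp (t * Complex.I))⁻¹ *
          (1 - (starRingEnd ℂ) a * Complex.exp (-(t * Complex.I)))⁻¹) (2 * π * θ) := by
        apply intervalIntegral.integral_congr; intro θ _; exact hcongr θ
    _ = ((2*π)⁻¹ : ℝ) • ∫ t in (2*π*0)..(2*π*1), (1 - a * Complex.exp (t * Complex.I))⁻¹ *
          (1 - (starRingEnd ℂ) a * Complex.exp (-(t * Complex.I)))⁻¹ := by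
        exact intervalIntegral.integral_comp_mul_left
          (fun t : ℝ => (1 - a * Complex.exp (t * Complex.I))⁻¹ *
            (1 - (starRingEnd ℂ) a * Complex.exp (-(t * Complex.I)))⁻¹) h2π
    _ = ((1 - ‖a‖^2)⁻¹ : ℝ) := by
        rw [show (2*π*0 : ℝ) = 0 by ring, show (2*π*1 : ℝ) = 2*π by ring, key1 a ha]
        rw [Complex.real_smul]
        push_cast
        rw [← mul_assoc, inv_mul_cancel₀ (mul_ne_zero two_ne_zero
          (Complex.ofReal_ne_zero.mpr Real.pi_ne_zero)), one_mul]


lemma key3 {n : ℕ} (f : Fin n → ℝ → ℂ) :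
    ∫ θ : Fin n → ℝ in Set.univ.pi (fun _ => Set.Icc (0 : ℝ) 1), ∏ m, f m (θ m)
    = ∏ m, ∫ t in Set.Icc (0:ℝ) 1, f m t := by
  rw [← MeasureTheory.integral_indicator
    (MeasurableSet.univ_pi (fun _ => measurableSet_Icc))]
  have hpt : ∀ θ : Fin n → ℝ,
      (Set.univ.pi (fun _ => Set.Icc (0:ℝ) 1)).indicator (fun θ => ∏ m, f m (θ m)) θ
      = ∏ m, (Set.Icc (0:ℝ) 1).indicator (f m) (θ m) := by
    intro θ
    by_cases h : θ ∈ Set.univ.pi (fun _ => Set.Icc (0:ℝ) 1)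
    · rw [Set.indicator_of_mem h]
      exact Finset.prod_congr rfl fun m _ =>
        (Set.indicator_of_mem (h m (Set.mem_univ m)) _).symm
    · rw [Set.indicator_of_notMem h]
      simp only [Set.mem_univ_pi, not_forall] at h
      obtain ⟨m, hm⟩ := h
      exact (Finset.prod_eq_zero (Finset.mem_univ m)
        (Set.indicator_of_notMem hm _)).symm
  rw [show (fun θ : Fin n → ℝ => (Set.univ.pi (fun _ => Set.Icc (0:ℝ) 1)).indicator
      (fun θ => ∏ m, f m (θ m)) θ) = fun θ => ∏ m, (Set.Icc (0:ℝ) 1).indicator (f m) (θ m)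
      from funext hpt]
  rw [MeasureTheory.integral_fintype_prod_volume_eq_prod
    (fun m => (Set.Icc (0:ℝ) 1).indicator (f m))]
  exact Finset.prod_congr rfl fun m _ =>
    MeasureTheory.integral_indicator measurableSet_Icc


lemma inv_le_exp_two (x : ℝ) (h0 : 0 ≤ x) (h1 : x ≤ 1/2) :
    (1 - x)⁻¹ ≤ Real.exp (2*x) := by
  have h2 : (0:ℝ) < 1 - x := by linarith
  have h3 := Real.add_one_le_exp (2*x)
  have h4 : (1 - x)⁻¹ ≤ 1 + 2*x := by
    rw [inv_le_iff_one_le_mul₀ h2]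
    nlinarith
  linarith


lemma sum_bound (σ : ℝ) (hσ : 1/2 < σ) {n : ℕ} :
    ∑ m : Fin n, ((m:ℝ)+2) ^ (-(2*σ)) ≤ ∑' k : ℕ, ((k:ℝ)+2) ^ (-(2*σ)) := by
  have hsum : Summable (fun k : ℕ => ((k:ℝ)+2) ^ (-(2*σ))) := by
    have h1 : Summable (fun k : ℕ => ((k:ℝ)) ^ (-(2*σ))) :=
      Real.summable_nat_rpow.mpr (by linarith)
    have h2 := h1.comp_injective (add_left_injective 2)
    refine h2.congr fun k => ?_
    simp only [Function.comp_apply]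
    push_cast
    norm_num
  calc ∑ m : Fin n, ((m:ℝ)+2) ^ (-(2*σ))
      = ∑ m ∈ Finset.range n, ((m:ℝ)+2) ^ (-(2*σ)) :=
        Fin.sum_univ_eq_sum_range (fun k => ((k:ℝ)+2) ^ (-(2*σ))) n
    _ ≤ ∑' k : ℕ, ((k:ℝ)+2) ^ (-(2*σ)) :=
      hsum.sum_le_tsum _ (fun k _ => Real.rpow_nonneg (by positivity) _)


theorem integral_euler_factors_bounded (σ : ℝ) (hσ : 1 / 2 < σ) :
    ∃ A : ℝ, ∀ n : ℕ, 1 ≤ n → ∀ c : ℕ → ℂ, (∀ k, ‖c k‖ ≤ 1) →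
      ‖∫ θ : Fin n → ℝ in Set.univ.pi (fun _ => Set.Icc (0 : ℝ) 1),
          ∏ m : Fin n,
            ((1 - c m * Complex.exp (2 * π * Complex.I * θ m)
                * (Nat.nth Nat.Prime m : ℂ) ^ (-(σ : ℂ)))⁻¹
              * (1 - (starRingEnd ℂ) (c m) * Complex.exp (-(2 * π * Complex.I * θ m))
                * (Nat.nth Nat.Prime m : ℂ) ^ (-(σ : ℂ)))⁻¹)‖ ≤ A := by
  refine ⟨Real.exp (2 * ∑' k : ℕ, ((k:ℝ)+2) ^ (-(2*σ))), ?_⟩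
  intro n _ c hc
  have hσ0 : 0 < σ := by linarith
  set w : Fin n → ℝ := fun m => ((Nat.nth Nat.Prime (m:ℕ) : ℝ)) ^ (-σ) with hw
  have hp2 : ∀ m : Fin n, (2:ℝ) ≤ (Nat.nth Nat.Prime (m:ℕ) : ℝ) := by
    intro m; exact_mod_cast (Nat.prime_nth_prime (m:ℕ)).two_le
  have hp0 : ∀ m : Fin n, (0:ℝ) < (Nat.nth Nat.Prime (m:ℕ) : ℝ) := fun m => by
    linarith [hp2 m]
  have hw_pos : ∀ m, 0 < w m := fun m => Real.rpow_pos_of_pos (hp0 m) _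
  have hw_lt1 : ∀ m, w m < 1 := fun m =>
    Real.rpow_lt_one_of_one_lt_of_neg (by linarith [hp2 m]) (by linarith)
  set a : Fin n → ℂ := fun m => c m * ((w m : ℝ) : ℂ) with hadef
  have ha_norm : ∀ m, ‖a m‖ ≤ w m := by
    intro m
    rw [hadef]
    calc ‖c m * ((w m : ℝ) : ℂ)‖ = ‖c m‖ * ‖((w m : ℝ) : ℂ)‖ := norm_mul _ _
      _ = ‖c m‖ * w m := by
          rw [Complex.norm_real, Real.norm_eq_abs, abs_of_pos (hw_pos m)]
      _ ≤ 1 * w m := by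
          have := hc m
          nlinarith [hw_pos m]
      _ = w m := one_mul _
  have ha_lt : ∀ m, ‖a m‖ < 1 := fun m => lt_of_le_of_lt (ha_norm m) (hw_lt1 m)
  have hP : ∀ m : Fin n, (Nat.nth Nat.Prime (m:ℕ) : ℂ) ^ (-(σ : ℂ)) = ((w m : ℝ) : ℂ) := by
    intro m
    rw [show ((Nat.nth Nat.Prime (m:ℕ) : ℂ)) = (((Nat.nth Nat.Prime (m:ℕ) : ℝ)) : ℂ) by
        push_cast; ring,
      show (-(σ:ℂ)) = ((-σ : ℝ) : ℂ) by push_cast; ring,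
      ← Complex.ofReal_cpow (le_of_lt (hp0 m)) (-σ)]
  have hint : ∀ θ : Fin n → ℝ, ∀ m : Fin n,
      ((1 - c m * Complex.exp (2 * π * Complex.I * θ m)
          * (Nat.nth Nat.Prime (m:ℕ) : ℂ) ^ (-(σ : ℂ)))⁻¹
        * (1 - (starRingEnd ℂ) (c m) * Complex.exp (-(2 * π * Complex.I * θ m))
          * (Nat.nth Nat.Prime (m:ℕ) : ℂ) ^ (-(σ : ℂ)))⁻¹)
      = (1 - a m * Complex.exp (2 * π * Complex.I * (θ m)))⁻¹ *
          (1 - (starRingEnd ℂ) (a m) * Complex.exp (-(2 * π * Complex.I * (θ m))))⁻¹ := by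
    intro θ m
    rw [hP m, hadef]
    simp only [map_mul, Complex.conj_ofReal]
    ring
  have heq : (∫ θ : Fin n → ℝ in Set.univ.pi (fun _ => Set.Icc (0 : ℝ) 1),
          ∏ m : Fin n,
            ((1 - c m * Complex.exp (2 * π * Complex.I * θ m)
                * (Nat.nth Nat.Prime m : ℂ) ^ (-(σ : ℂ)))⁻¹
              * (1 - (starRingEnd ℂ) (c m) * Complex.exp (-(2 * π * Complex.I * θ m))
                * (Nat.nth Nat.Prime m : ℂ) ^ (-(σ : ℂ)))⁻¹))
      = ∏ m : Fin n, (((1 - ‖a m‖^2)⁻¹ : ℝ) : ℂ) := by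
    have h1 : (∫ θ : Fin n → ℝ in Set.univ.pi (fun _ => Set.Icc (0 : ℝ) 1),
          ∏ m : Fin n,
            ((1 - c m * Complex.exp (2 * π * Complex.I * θ m)
                * (Nat.nth Nat.Prime m : ℂ) ^ (-(σ : ℂ)))⁻¹
              * (1 - (starRingEnd ℂ) (c m) * Complex.exp (-(2 * π * Complex.I * θ m))
                * (Nat.nth Nat.Prime m : ℂ) ^ (-(σ : ℂ)))⁻¹))
        = ∫ θ : Fin n → ℝ in Set.univ.pi (fun _ => Set.Icc (0 : ℝ) 1),
            ∏ m : Fin n, (fun t : ℝ => (1 - a m * Complex.exp (2 * π * Complex.I * t))⁻¹ *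
              (1 - (starRingEnd ℂ) (a m) * Complex.exp (-(2 * π * Complex.I * t)))⁻¹) (θ m) := by
      apply integral_congr_ae
      filter_upwards with θ
      exact Finset.prod_congr rfl fun m _ => hint θ m
    rw [h1, key3 (fun m t => (1 - a m * Complex.exp (2 * π * Complex.I * t))⁻¹ *
      (1 - (starRingEnd ℂ) (a m) * Complex.exp (-(2 * π * Complex.I * t)))⁻¹)]
    exact Finset.prod_congr rfl fun m _ => key2 (a m) (ha_lt m)
  rw [heq]
  have hpos : ∀ m : Fin n, (0:ℝ) < 1 - ‖a m‖^2 := by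
    intro m
    nlinarith [ha_lt m, norm_nonneg (a m)]
  have hnorm : ‖∏ m : Fin n, (((1 - ‖a m‖^2)⁻¹ : ℝ) : ℂ)‖
      = ∏ m : Fin n, (1 - ‖a m‖^2)⁻¹ := by
    rw [norm_prod]
    exact Finset.prod_congr rfl fun m _ => by
      rw [Complex.norm_real, Real.norm_eq_abs, abs_of_pos (inv_pos.mpr (hpos m))]
  rw [hnorm]
  -- now the real bound
  have hw2 : ∀ m : Fin n, w m ^ 2 = (Nat.nth Nat.Prime (m:ℕ) : ℝ) ^ (-(2*σ)) := by
    intro m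
    rw [hw]
    rw [← Real.rpow_natCast (((Nat.nth Nat.Prime (m:ℕ) : ℝ)) ^ (-σ)) 2,
      ← Real.rpow_mul (le_of_lt (hp0 m))]
    norm_num
    ring_nf
  have hg : ∀ m : Fin n, w m ^ 2 ≤ ((m:ℝ)+2) ^ (-(2*σ)) := by
    intro m
    rw [hw2 m]
    apply Real.rpow_le_rpow_of_nonpos (by positivity)
    · have := Nat.add_two_le_nth_prime (m:ℕ)
      push_cast
      exact_mod_cast this
    · linarith
  have hhalf : ∀ m : Fin n, w m ^ 2 ≤ 1/2 := by
    intro m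
    rw [hw2 m]
    calc (Nat.nth Nat.Prime (m:ℕ) : ℝ) ^ (-(2*σ)) ≤ (2:ℝ) ^ (-(2*σ)) :=
        Real.rpow_le_rpow_of_nonpos two_pos (hp2 m) (by linarith)
      _ ≤ (2:ℝ) ^ (-1 : ℝ) :=
        Real.rpow_le_rpow_of_exponent_le one_le_two (by linarith)
      _ = 1/2 := by rw [Real.rpow_neg_one]; norm_num
  calc ∏ m : Fin n, (1 - ‖a m‖^2)⁻¹
      ≤ ∏ m : Fin n, Real.exp (2 * (((m:ℝ)+2) ^ (-(2*σ)))) := by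
        apply Finset.prod_le_prod
        · intro m _; exact le_of_lt (inv_pos.mpr (hpos m))
        · intro m _
          calc (1 - ‖a m‖^2)⁻¹ ≤ (1 - w m ^2)⁻¹ := by
                apply inv_anti₀
                · nlinarith [hw_lt1 m, hw_pos m]
                · nlinarith [ha_norm m, norm_nonneg (a m), hw_pos m]
            _ ≤ Real.exp (2 * (w m ^ 2)) :=
                inv_le_exp_two _ (by positivity) (hhalf m)
            _ ≤ Real.exp (2 * (((m:ℝ)+2) ^ (-(2*σ)))) := by
                apply Real.exp_le_exp.mpr
                linarith [hg m]
    _ = Real.exp (∑ m : Fin n, 2 * (((m:ℝ)+2) ^ (-(2*σ)))) := (Real.exp_sum _ _).symm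
    _ ≤ Real.exp (2 * ∑' k : ℕ, ((k:ℝ)+2) ^ (-(2*σ))) := by
        apply Real.exp_le_exp.mpr
        rw [← Finset.mul_sum]
        have := sum_bound σ hσ (n := n)
        nlinarith [this]
end

section
/- Let χ₁,…,χ_J be complex characters of a finite abelian group G with χ_j ≠ χ_k and χ_j ≠ conj(χ_k) for j ≠ k, and let b₁,…,b_J ∈ ℂ. Then there exists g ∈ G such that |Σ_{j=1}^J Re(χ_j(g)) b_j|² ≥ (1/2) Σ_{j=1}^J |b_j|². -/
open Finset Complex
set_option linter.unusedSectionVars false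

section aux
variable {G : Type*} [CommGroup G] [Fintype G]

private lemma char_sum_zero (f : G →* ℂ) (hf : f ≠ 1) : ∑ g : G, f g = 0 := by
  obtain ⟨h, hh⟩ : ∃ h : G, f h ≠ 1 := by
    by_contra hc
    push_neg at hc
    exact hf (MonoidHom.ext fun g => by simp [hc g])
  have key : f h * ∑ g : G, f g = ∑ g : G, f g := by
    rw [Finset.mul_sum]
    simp_rw [← map_mul]
    exact Fintype.sum_bijective _ (Group.mulLeft_bijective h) _ _ fun g => rfl
  have h2 : (f h - 1) * ∑ g : G, f g = 0 := by rw [sub_mul, one_mul, key, sub_self]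
  rcases mul_eq_zero.mp h2 with h1 | h1
  · exact absurd (sub_eq_zero.mp h1) hh
  · exact h1

private lemma char_sum (f : G →* ℂ) :
    ∑ g : G, f g = if f = 1 then (Fintype.card G : ℂ) else 0 := by
  split_ifs with h
  · subst h; simp
  · exact char_sum_zero f h

private lemma char_mul_conj' (f : G →* ℂ) (g : G) : f g * (starRingEnd ℂ) (f g) = 1 := by
  have hpow : f g ^ Fintype.card G = 1 := by
    rw [← map_pow, pow_card_eq_one, map_one]
  have hn : ‖f g‖ = 1 := Complex.norm_eq_one_of_pow_eq_one hpow Fintype.card_ne_zero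
  rw [Complex.mul_conj, Complex.normSq_eq_norm_sq, hn]
  norm_num

private def cc {G : Type*} [CommGroup G] (f : G →* ℂ) : G →* ℂ :=
  (((starRingEnd ℂ) : ℂ →* ℂ).comp f)

@[simp] private lemma cc_apply (f : G →* ℂ) (g : G) : cc f g = (starRingEnd ℂ) (f g) := rfl

private lemma conj_conj_char (f : G →* ℂ) : cc (cc f) = f :=
  MonoidHom.ext fun g => by simp

private lemma charMulConj_eq_one_iff (f ψ : G →* ℂ) :
    f * cc ψ = 1 ↔ f = ψ := by
  constructor
  · intro h
    ext g
    have h1 : f g * (starRingEnd ℂ) (ψ g) = 1 := by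
      have h' := DFunLike.congr_fun h g
      simpa [MonoidHom.mul_apply] using h'
    have h2 : ψ g * (starRingEnd ℂ) (ψ g) = 1 := char_mul_conj' ψ g
    have hne : (starRingEnd ℂ) (ψ g) ≠ 0 := by
      intro h0; rw [h0, mul_zero] at h1; exact zero_ne_one h1
    exact mul_right_cancel₀ hne (h1.trans h2.symm)
  · rintro rfl
    ext g
    exact char_mul_conj' f g

private lemma charMul_eq_one_iff (f ψ : G →* ℂ) :
    f * ψ = 1 ↔ f = cc ψ := by
  conv_lhs => rw [← conj_conj_char ψ]
  exact charMulConj_eq_one_iff f (cc ψ)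

private lemma charConj_eq_iff (f ψ : G →* ℂ) : cc f = ψ ↔ f = cc ψ := by
  constructor
  · rintro rfl; exact (conj_conj_char f).symm
  · rintro rfl; exact conj_conj_char ψ

private lemma conj_mul_char (f ψ : G →* ℂ) : cc f * cc ψ = cc (f * ψ) :=
  MonoidHom.ext fun g => by simp

private lemma charConj_eq_one_iff (f : G →* ℂ) : cc f = 1 ↔ f = 1 := by
  rw [charConj_eq_iff]
  have : cc (1 : G →* ℂ) = 1 := MonoidHom.ext fun g => by simp
  rw [this]

end aux

theorem exists_real_part_character_sum_large (G : Type*) [CommGroup G] [Fintype G]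
    (J : ℕ) (χ : Fin J → (G →* ℂ)) (b : Fin J → ℂ)
    (hne : ∀ j k : Fin J, j ≠ k → χ j ≠ χ k ∧
      χ j ≠ ((starRingEnd ℂ) : ℂ →* ℂ).comp (χ k)) :
    ∃ g : G, ‖∑ j : Fin J, ((χ j g).re : ℂ) * b j‖ ^ 2 ≥
      (1 / 2) * ∑ j : Fin J, ‖b j‖ ^ 2 := by
  classical
  set n : ℕ := Fintype.card G with hn
  set r : Fin J → G → ℂ := fun j g => ((χ j g).re : ℂ) with hr
  set S : G → ℂ := fun g => ∑ j : Fin J, r j g * b j with hS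
  set A : Fin J → Fin J → ℂ := fun j k => ∑ g : G, r j g * r k g with hA
  have hre : ∀ z : ℂ, ((z.re : ℂ)) = (z + (starRingEnd ℂ) z) / 2 := by
    intro z
    rw [Complex.add_conj]
    push_cast
    ring
  -- A as four character sums
  have hA4 : ∀ j k, A j k = (1/4) * ((∑ g : G, (χ j * χ k) g) + (∑ g : G, (χ j * cc (χ k)) g)
      + (∑ g : G, (cc (χ j) * χ k) g) + (∑ g : G, (cc (χ j) * cc (χ k)) g)) := by
    intro j k
    have hterm : ∀ g : G, r j g * r k g = (1/4) * ((χ j * χ k) g + (χ j * cc (χ k)) g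
        + (cc (χ j) * χ k) g + (cc (χ j) * cc (χ k)) g) := by
      intro g
      simp only [hr, MonoidHom.mul_apply, cc_apply]
      rw [hre, hre]
      ring
    calc A j k = ∑ g : G, (1/4) * ((χ j * χ k) g + (χ j * cc (χ k)) g
        + (cc (χ j) * χ k) g + (cc (χ j) * cc (χ k)) g) :=
          Finset.sum_congr rfl fun g _ => hterm g
      _ = _ := by
          rw [← Finset.mul_sum, Finset.sum_add_distrib, Finset.sum_add_distrib,
            Finset.sum_add_distrib]
  -- off-diagonal vanishing
  have hoff : ∀ j k, j ≠ k → A j k = 0 := by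
    intro j k hjk
    have h1 : χ j * χ k ≠ 1 := fun h => (hne j k hjk).2 ((charMul_eq_one_iff _ _).mp h)
    have h2 : χ j * cc (χ k) ≠ 1 := fun h => (hne j k hjk).1 ((charMulConj_eq_one_iff _ _).mp h)
    have h3 : cc (χ j) * χ k ≠ 1 := by
      rw [mul_comm]
      exact fun h => (hne k j hjk.symm).1 ((charMulConj_eq_one_iff _ _).mp h)
    have h4 : cc (χ j) * cc (χ k) ≠ 1 := by
      rw [conj_mul_char]
      exact fun h => h1 ((charConj_eq_one_iff _).mp h)
    rw [hA4, char_sum, char_sum, char_sum, char_sum, if_neg h1, if_neg h2, if_neg h3, if_neg h4]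
    ring
  -- diagonal lower bound
  have hdiag : ∀ j, (n : ℝ) / 2 ≤ (A j j).re := by
    intro j
    have h2 : χ j * cc (χ j) = 1 := (charMulConj_eq_one_iff _ _).mpr rfl
    have h3 : cc (χ j) * χ j = 1 := by rw [mul_comm]; exact h2
    have h4 : (cc (χ j) * cc (χ j) = 1) ↔ (χ j * χ j = 1) := by
      rw [conj_mul_char, charConj_eq_one_iff]
    rw [hA4, char_sum, char_sum, char_sum, char_sum, if_pos h2, if_pos h3]
    by_cases h1 : χ j * χ j = 1
    · rw [if_pos h1, if_pos (h4.mpr h1)]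
      have he : ((1:ℂ)/4 * ((n:ℂ) + (n:ℂ) + (n:ℂ) + (n:ℂ))) = Complex.ofReal ((n:ℝ)) := by
        push_cast; ring
      rw [he, Complex.ofReal_re]
      have hge : (0:ℝ) ≤ (n:ℝ) := Nat.cast_nonneg n
      linarith
    · rw [if_neg h1, if_neg (fun h => h1 (h4.mp h))]
      have he : ((1:ℂ)/4 * ((0:ℂ) + (n:ℂ) + (n:ℂ) + 0)) = Complex.ofReal ((n:ℝ)/2) := by
        push_cast; ring
      rw [he, Complex.ofReal_re]
  -- expand the averaged sum
  have hexpand : ∑ g : G, S g * (starRingEnd ℂ) (S g)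
      = ∑ j : Fin J, ∑ k : Fin J, (b j * (starRingEnd ℂ) (b k)) * A j k := by
    calc ∑ g : G, S g * (starRingEnd ℂ) (S g)
        = ∑ g : G, ∑ j : Fin J, ∑ k : Fin J,
            (b j * (starRingEnd ℂ) (b k)) * (r j g * r k g) := by
          refine Finset.sum_congr rfl fun g _ => ?_
          rw [hS]
          simp only [map_sum, map_mul, Finset.sum_mul_sum]
          refine Finset.sum_congr rfl fun j _ => Finset.sum_congr rfl fun k _ => ?_
          simp only [hr, Complex.conj_ofReal]
          ring
      _ = ∑ j : Fin J, ∑ k : Fin J, (b j * (starRingEnd ℂ) (b k)) * A j k := by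
          rw [Finset.sum_comm]
          refine Finset.sum_congr rfl fun j _ => ?_
          rw [Finset.sum_comm]
          exact Finset.sum_congr rfl fun k _ => by rw [← Finset.mul_sum]
  have hdiagsum : ∑ g : G, S g * (starRingEnd ℂ) (S g)
      = ∑ j : Fin J, (Complex.normSq (b j) : ℂ) * A j j := by
    rw [hexpand]
    refine Finset.sum_congr rfl fun j _ => ?_
    rw [Finset.sum_eq_single_of_mem j (Finset.mem_univ j)]
    · rw [Complex.mul_conj]
    · intro k _ hk
      rw [hoff j k (Ne.symm hk), mul_zero]
  -- the real averaged inequality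
  have habs : ∀ z : ℂ, ‖z‖ ^ 2 = (z * (starRingEnd ℂ) z).re := by
    intro z
    rw [Complex.mul_conj, Complex.normSq_eq_norm_sq, Complex.ofReal_re]
  have hmain : (n : ℝ) * ((1/2) * ∑ j : Fin J, ‖b j‖ ^ 2)
      ≤ ∑ g : G, ‖S g‖ ^ 2 := by
    have h1 : ∑ g : G, ‖S g‖ ^ 2
        = ∑ j : Fin J, Complex.normSq (b j) * (A j j).re := by
      calc ∑ g : G, ‖S g‖ ^ 2
          = (∑ g : G, S g * (starRingEnd ℂ) (S g)).re := by
            rw [Complex.re_sum]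
            exact Finset.sum_congr rfl fun g _ => habs (S g)
        _ = ∑ j : Fin J, Complex.normSq (b j) * (A j j).re := by
            rw [hdiagsum, Complex.re_sum]
            exact Finset.sum_congr rfl fun j _ => by rw [Complex.re_ofReal_mul]
    rw [h1]
    have h2 : ∀ j : Fin J, ‖b j‖ ^ 2 * ((n:ℝ)/2)
        ≤ Complex.normSq (b j) * (A j j).re := by
      intro j
      rw [← Complex.normSq_eq_norm_sq]
      exact mul_le_mul_of_nonneg_left (hdiag j) (Complex.normSq_nonneg _)
    calc (n : ℝ) * ((1/2) * ∑ j : Fin J, ‖b j‖ ^ 2)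
        = ∑ j : Fin J, ‖b j‖ ^ 2 * ((n:ℝ)/2) := by
          rw [← Finset.sum_mul]; ring
      _ ≤ _ := Finset.sum_le_sum fun j _ => h2 j
  -- conclude by averaging
  by_contra hcon
  push_neg at hcon
  have hlt : ∑ g : G, ‖S g‖ ^ 2
      < ∑ _g : G, (1/2) * ∑ j : Fin J, ‖b j‖ ^ 2 :=
    Finset.sum_lt_sum_of_nonempty Finset.univ_nonempty fun g _ => hcon g
  rw [Finset.sum_const, Finset.card_univ, nsmul_eq_mul] at hlt
  exact absurd hmain (not_le.mpr hlt)
end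

section
/- Let f(s) = Σ_{n=1}^∞ a_n n^{−s} be a Dirichlet series absolutely and uniformly convergent for Re s > 1, not identically zero. Suppose f(ρ) = 0 with ρ = β + iγ, β > 1. Then for any fixed 0 < δ < β − 1 there is a constant c_δ > 0 such that for all sufficiently large T, f has at least c_δ T zeros in the region |Re s − β| < δ, 0 < Im s < T. -/
open Filter Metric Set


/-- Almost periodicity of the exponentials: return times are syndetic. -/
lemma syndetic_exp (N : ℕ) (ε : ℝ) (hε : 0 < ε) :
    ∃ M : ℝ, 0 < M ∧ ∀ x : ℝ, ∃ t : ℝ, x ≤ t ∧ t ≤ x + M ∧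
      ∀ n < N, ‖Complex.exp (Complex.I * t * (Real.log (n + 1) : ℂ)) - 1‖ < ε := by
  set φ : ℝ → (Fin N → ℂ) :=
    fun t n => Complex.exp (Complex.I * t * (Real.log ((n : ℕ) + 1) : ℂ)) with hφ
  have hnorm : ∀ t (n : Fin N), ‖φ t n‖ = 1 := by
    intro t n
    simp only [hφ, Complex.norm_exp]
    have : (Complex.I * (t : ℂ) * (Real.log ((n : ℕ) + 1) : ℂ)).re = 0 := by
      simp [Complex.mul_re, Complex.mul_im]
    rw [this, Real.exp_zero]
  have hmul : ∀ s t (n : Fin N), φ (s + t) n = φ s n * φ t n := by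
    intro s t n
    simp only [hφ, ← Complex.exp_add]
    congr 1
    push_cast
    ring
  have hKsub : Set.range φ ⊆ closedBall (0 : Fin N → ℂ) 1 := by
    rintro _ ⟨t, rfl⟩
    rw [mem_closedBall, dist_zero_right]
    refine pi_norm_le_iff_of_nonneg zero_le_one |>.2 fun n => le_of_eq (hnorm t n)
  have hK : IsCompact (closure (Set.range φ)) :=
    (isCompact_closedBall _ _).of_isClosed_subset isClosed_closure
      (closure_minimal hKsub Metric.isClosed_closedBall)
  have hcover : closure (Set.range φ) ⊆ ⋃ t : ℝ, ball (φ t) (ε / 2) := by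
    intro z hz
    rcases Metric.mem_closure_iff.1 hz (ε / 2) (by linarith) with ⟨w, ⟨t, rfl⟩, hw⟩
    exact Set.mem_iUnion.2 ⟨t, by simpa [dist_comm] using hw⟩
  obtain ⟨T, hT⟩ := hK.elim_finite_subcover (fun t : ℝ => ball (φ t) (ε / 2))
    (fun t => isOpen_ball) hcover
  set B : ℝ := ∑ t ∈ T, |t| with hB
  have hBnn : 0 ≤ B := Finset.sum_nonneg fun t _ => abs_nonneg t
  have habs : ∀ t ∈ T, |t| ≤ B := fun t ht =>
    Finset.single_le_sum (fun t _ => abs_nonneg t) ht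
  refine ⟨2 * B + 1, by linarith, fun x => ?_⟩
  have hmem : φ (x + B) ∈ closure (Set.range φ) := subset_closure ⟨x + B, rfl⟩
  rcases Set.mem_iUnion₂.1 (hT hmem) with ⟨t₀, ht₀T, ht₀⟩
  refine ⟨x + B - t₀, by have := (abs_le.1 (habs t₀ ht₀T)).2; linarith,
    by have := (abs_le.1 (habs t₀ ht₀T)).1; linarith, fun n hn => ?_⟩
  have key : ∀ m : Fin N, ‖φ (x + B - t₀) m - 1‖ < ε := by
    intro m
    have h1 : φ (x + B) m = φ (x + B - t₀) m * φ t₀ m := by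
      rw [← hmul]; ring_nf
    have h2 : ‖φ (x + B) m - φ t₀ m‖ < ε / 2 := by
      have := dist_le_pi_dist (φ (x + B)) (φ t₀) m
      have hd : dist (φ (x + B)) (φ t₀) < ε / 2 := mem_ball.1 ht₀
      calc ‖φ (x + B) m - φ t₀ m‖ = dist (φ (x + B) m) (φ t₀ m) := (dist_eq_norm _ _).symm
        _ ≤ dist (φ (x + B)) (φ t₀) := this
        _ < ε / 2 := hd
    have h3 : φ (x + B) m - φ t₀ m = (φ (x + B - t₀) m - 1) * φ t₀ m := by
      rw [h1]; ring
    have h4 : ‖φ (x + B) m - φ t₀ m‖ = ‖φ (x + B - t₀) m - 1‖ := by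
      rw [h3, norm_mul, hnorm, mul_one]
    linarith [h4 ▸ h2]
  exact key ⟨n, hn⟩

/-- Minimum modulus principle: a near-zero inside forces a zero. -/
lemma exists_zero_of_min_modulus {g : ℂ → ℂ} {U : Set ℂ} (hU : IsOpen U)
    (hg : DifferentiableOn ℂ g U) {z₀ : ℂ} {r m : ℝ} (hr : 0 < r)
    (hball : closedBall z₀ r ⊆ U) (hm : ∀ z ∈ sphere z₀ r, m ≤ ‖g z‖)
    (hz₀ : ‖g z₀‖ < m) : ∃ z ∈ closedBall z₀ r, g z = 0 := by
  by_contra h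
  push_neg at h
  have hm0 : 0 < m := lt_of_le_of_lt (norm_nonneg _) hz₀
  set V : Set ℂ := U ∩ g ⁻¹' {(0 : ℂ)}ᶜ with hV
  have hVopen : IsOpen V := hg.continuousOn.isOpen_inter_preimage hU isOpen_compl_singleton
  have hsub : closedBall z₀ r ⊆ V := fun z hz => ⟨hball hz, h z hz⟩
  have hginv : DifferentiableOn ℂ (fun z => (g z)⁻¹) V :=
    (hg.mono Set.inter_subset_left).inv (fun z hz => hz.2)
  have hcl : closure (ball z₀ r) = closedBall z₀ r := closure_ball z₀ hr.ne'
  have hdc : DiffContOnCl ℂ (fun z => (g z)⁻¹) (ball z₀ r) :=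
    DifferentiableOn.diffContOnCl (by rw [hcl]; exact hginv.mono hsub)
  have hbound : ‖(g z₀)⁻¹‖ ≤ m⁻¹ := by
    refine Complex.norm_le_of_forall_mem_frontier_norm_le isBounded_ball hdc ?_ ?_
    · intro z hz
      rw [frontier_ball z₀ hr.ne'] at hz
      rw [norm_inv]
      exact inv_anti₀ hm0 (hm z hz)
    · rw [hcl]; exact mem_closedBall_self hr.le
  rw [norm_inv] at hbound
  have hgz₀ : 0 < ‖g z₀‖ := norm_pos_iff.2 (h z₀ (mem_closedBall_self hr.le))
  have := (inv_le_inv₀ hgz₀ hm0).1 hbound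
  linarith


set_option maxHeartbeats 1000000 in
theorem zeros_in_strip_of_dirichlet_series_zero
    (f : ℂ → ℂ) (a : ℕ → ℂ)
    (hsum : ∀ s : ℂ, 1 < s.re →
      HasSum (fun n : ℕ => a (n + 1) / ((n : ℂ) + 1) ^ s) (f s))
    (hunif : ∀ ε : ℝ, 0 < ε →
      TendstoUniformlyOn
        (fun N : ℕ => fun s : ℂ => ∑ n ∈ Finset.range N, a (n + 1) / ((n : ℂ) + 1) ^ s)
        f atTop {s : ℂ | 1 + ε ≤ s.re})
    (hnz : ∃ s : ℂ, 1 < s.re ∧ f s ≠ 0)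
    (ρ : ℂ) (hρ : f ρ = 0) (hβ : 1 < ρ.re)
    (δ : ℝ) (hδ : 0 < δ) (hδβ : δ < ρ.re - 1) :
    ∃ c : ℝ, 0 < c ∧ ∃ T₀ : ℝ, ∀ T : ℝ, T₀ ≤ T →
      c * T ≤ ({s : ℂ | f s = 0 ∧ |s.re - ρ.re| < δ ∧ 0 < s.im ∧ s.im < T}.ncard : ℝ) := by
  set β := ρ.re with hβdef
  set U : Set ℂ := {s : ℂ | 1 < s.re} with hUdef
  have hUopen : IsOpen U := isOpen_lt continuous_const Complex.continuous_re
  set P : ℕ → ℂ → ℂ := fun N s => ∑ n ∈ Finset.range N, a (n + 1) / ((n : ℂ) + 1) ^ s with hPdef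
  have hc0 : ∀ n : ℕ, ((n : ℂ) + 1) ≠ 0 := fun n => Nat.cast_add_one_ne_zero n
  have hPdiff : ∀ N, Differentiable ℂ (P N) := by
    intro N
    apply Differentiable.fun_sum
    intro n _
    apply Differentiable.div (differentiable_const _)
    · exact fun s => DifferentiableAt.const_cpow differentiableAt_id (Or.inl (hc0 n))
    · intro s
      simp only [Ne, Complex.cpow_eq_zero_iff, not_and_or, not_not]
      exact Or.inl (hc0 n)
  -- f is differentiable on U
  have hfd : DifferentiableOn ℂ f U := by
    intro s hs
    have hs1 : 1 < s.re := hs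
    have hε : 0 < (s.re - 1) / 2 := by linarith
    set V : Set ℂ := {z : ℂ | 1 + (s.re - 1) / 2 < z.re} with hVdef
    have hVopen : IsOpen V := isOpen_lt continuous_const Complex.continuous_re
    have htu : TendstoUniformlyOn P f atTop V :=
      (hunif _ hε).mono fun z hz => by
        simp only [Set.mem_setOf_eq] at hz ⊢; exact hz.le
    have hd : DifferentiableOn ℂ f V :=
      htu.tendstoLocallyUniformlyOn.differentiableOn
        (Eventually.of_forall fun N => (hPdiff N).differentiableOn) hVopen
    have hsV : s ∈ V := by simp only [hVdef, Set.mem_setOf_eq]; linarith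
    exact (hd.differentiableAt (hVopen.mem_nhds hsV)).differentiableWithinAt
  have hAna : AnalyticOnNhd ℂ f U := hfd.analyticOnNhd hUopen
  have hpre : IsPreconnected U := (convex_halfSpace_re_gt 1).isPreconnected
  obtain ⟨s₁, hs₁U, hs₁⟩ := hnz
  have hρU : ρ ∈ U := hβ
  -- isolated zero
  have hne : ∀ᶠ z in nhdsWithin ρ {ρ}ᶜ, f z ≠ 0 := by
    rcases (hAna ρ hρU).eventually_eq_zero_or_eventually_ne_zero with h | h
    · exfalso
      have heq : EqOn f 0 U :=
        hAna.eqOn_zero_of_preconnected_of_eventuallyEq_zero hpre hρU h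
      exact hs₁ (heq hs₁U)
    · exact h
  obtain ⟨r₁, hr₁0, hr₁⟩ : ∃ r₁ > 0, ∀ z : ℂ, dist z ρ < r₁ → z ≠ ρ → f z ≠ 0 := by
    rw [eventually_nhdsWithin_iff, Metric.eventually_nhds_iff] at hne
    obtain ⟨ε, hε, h⟩ := hne
    exact ⟨ε, hε, fun z h1 h2 => h h1 h2⟩
  set r : ℝ := min (δ / 2) (r₁ / 2) with hrdef
  have hr0 : 0 < r := lt_min (by linarith) (by linarith)
  have hrδ : r < δ := lt_of_le_of_lt (min_le_left _ _) (by linarith)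
  have hrβ : 1 < β - r := by
    have : r ≤ δ / 2 := min_le_left _ _
    simp only [hβdef]; linarith
  have hrr₁ : r < r₁ := lt_of_le_of_lt (min_le_right _ _) (by linarith)
  have hballU : closedBall ρ r ⊆ U := by
    intro z hz
    have h1 : |(z - ρ).re| ≤ ‖z - ρ‖ := Complex.abs_re_le_norm _
    have h2 : ‖z - ρ‖ ≤ r := by rwa [mem_closedBall, Complex.dist_eq] at hz
    have h3 : |z.re - β| ≤ r := by
      simpa [Complex.sub_re] using h1.trans h2
    have := (abs_le.1 h3).1
    show 1 < z.re
    linarith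
  -- minimum of ‖f‖ on the sphere
  have hsne : (sphere ρ r).Nonempty := NormedSpace.sphere_nonempty.2 hr0.le
  have hfc : ContinuousOn (fun z => ‖f z‖) (sphere ρ r) :=
    (hfd.continuousOn.mono (sphere_subset_closedBall.trans hballU)).norm
  obtain ⟨z₀, hz₀s, hz₀min⟩ :=
    (isCompact_sphere ρ r).exists_isMinOn hsne hfc
  set m₀ : ℝ := ‖f z₀‖ with hm₀def
  have hm₀ : 0 < m₀ := by
    apply norm_pos_iff.2
    apply hr₁ z₀
    · rw [mem_sphere] at hz₀s; rw [hz₀s]; exact hrr₁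
    · intro h
      rw [mem_sphere, h, dist_self] at hz₀s
      exact hr0.ne' hz₀s.symm
  -- uniform approximation index N
  set ε₀ : ℝ := β - r - 1 with hε₀def
  have hε₀ : 0 < ε₀ := by simp only [hε₀def]; linarith
  obtain ⟨N, hN⟩ : ∃ N : ℕ, ∀ x ∈ {s : ℂ | 1 + ε₀ ≤ s.re}, dist (f x) (P N x) < m₀ / 9 := by
    have := (Metric.tendstoUniformlyOn_iff.1 (hunif ε₀ hε₀)) (m₀ / 9) (by positivity)
    exact this.exists
  set A : ℝ := ∑ n ∈ Finset.range N, ‖a (n + 1)‖ with hAdef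
  have hA0 : 0 ≤ A := Finset.sum_nonneg fun n _ => norm_nonneg _
  set ε' : ℝ := m₀ / (9 * (A + 1)) with hε'def
  have hε' : 0 < ε' := by positivity
  obtain ⟨M, hM0, hMs⟩ := syndetic_exp N ε' hε'
  -- the shift estimate
  have hshift : ∀ t : ℝ,
      (∀ n < N, ‖Complex.exp (Complex.I * t * (Real.log (n + 1) : ℂ)) - 1‖ < ε') →
      ∀ w ∈ closedBall ρ r, ‖f (w + t * Complex.I) - f w‖ < m₀ / 3 := by
    intro t ht w hw
    have h2 : ‖w - ρ‖ ≤ r := by rwa [mem_closedBall, Complex.dist_eq] at hw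
    have h3 : |w.re - β| ≤ r := by
      simpa [Complex.sub_re] using (Complex.abs_re_le_norm (w - ρ)).trans h2
    have hwre : 1 + ε₀ ≤ w.re := by
      have := (abs_le.1 h3).1; simp only [hε₀def]; linarith
    have hwre' : (w + t * Complex.I).re = w.re := by simp
    have h1 := hN w hwre
    have h2' := hN (w + t * Complex.I) (by rw [Set.mem_setOf_eq, hwre']; exact hwre)
    -- middle term
    have hmid : ‖P N (w + t * Complex.I) - P N w‖ ≤ A * ε' := by
      have hsum' : P N (w + t * Complex.I) - P N w =
          ∑ n ∈ Finset.range N,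
            (a (n + 1) / ((n : ℂ) + 1) ^ (w + t * Complex.I) - a (n + 1) / ((n : ℂ) + 1) ^ w) := by
        simp only [hPdef, Finset.sum_sub_distrib]
      rw [hsum']
      refine (norm_sum_le _ _).trans ?_
      rw [hAdef, Finset.sum_mul]
      refine Finset.sum_le_sum fun n hn => ?_
      have hnN : n < N := Finset.mem_range.1 hn
      set c : ℂ := (n : ℂ) + 1 with hcdef
      have hcne : c ≠ 0 := hc0 n
      have hcr : c = (((n : ℝ) + 1 : ℝ) : ℂ) := by push_cast; ring
      set E : ℂ := Complex.exp (Complex.I * t * (Real.log ((n : ℝ) + 1) : ℂ)) with hEdef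
      have hEne : E ≠ 0 := Complex.exp_ne_zero _
      have hEnorm : ‖E‖ = 1 := by
        rw [hEdef, Complex.norm_exp]
        have : (Complex.I * (t : ℂ) * ((Real.log ((n : ℝ) + 1) : ℝ) : ℂ)).re = 0 := by
          simp [Complex.mul_re, Complex.mul_im]
        rw [this, Real.exp_zero]
      have hE : c ^ ((t : ℝ) * Complex.I : ℂ) = E := by
        rw [Complex.cpow_def_of_ne_zero hcne]
        rw [hcr, ← Complex.ofReal_log (by positivity)]
        congr 1
        ring
      have hsplit : c ^ (w + t * Complex.I) = c ^ w * E := by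
        rw [Complex.cpow_add _ _ hcne, hE]
      have hcwne : c ^ w ≠ 0 := by
        simp only [Ne, Complex.cpow_eq_zero_iff, not_and_or, not_not]
        exact Or.inl hcne
      have hcw : (1 : ℝ) ≤ ‖c ^ w‖ := by
        rw [hcr, Complex.norm_cpow_eq_rpow_re_of_pos (by positivity)]
        calc (1 : ℝ) = ((n : ℝ) + 1) ^ (0 : ℝ) := (Real.rpow_zero _).symm
          _ ≤ _ := Real.rpow_le_rpow_of_exponent_le (by linarith [Nat.cast_nonneg (α := ℝ) n])
              (by linarith)
      have hdiff : a (n + 1) / c ^ (w + t * Complex.I) - a (n + 1) / c ^ w =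
          a (n + 1) / c ^ w * (1 - E) * E⁻¹ := by
        rw [hsplit]
        field_simp
      rw [hdiff]
      have hEb : ‖(1 : ℂ) - E‖ < ε' := by
        rw [norm_sub_rev]
        exact ht n hnN
      calc ‖a (n + 1) / c ^ w * (1 - E) * E⁻¹‖
          = ‖a (n + 1)‖ / ‖c ^ w‖ * ‖(1 : ℂ) - E‖ * ‖E‖⁻¹ := by
            rw [norm_mul, norm_mul, norm_div, norm_inv]
        _ ≤ ‖a (n + 1)‖ * ‖(1 : ℂ) - E‖ * 1 := by
            rw [hEnorm, inv_one]
            have : ‖a (n + 1)‖ / ‖c ^ w‖ ≤ ‖a (n + 1)‖ :=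
              div_le_self (norm_nonneg _) hcw
            exact mul_le_mul_of_nonneg_right (mul_le_mul_of_nonneg_right this (norm_nonneg _))
              zero_le_one
        _ ≤ ‖a (n + 1)‖ * ε' := by
            rw [mul_one]
            exact mul_le_mul_of_nonneg_left hEb.le (norm_nonneg _)
    have hAε : A * ε' < m₀ / 9 := by
      have h9 : (A + 1) * ε' = m₀ / 9 := by
        rw [hε'def]; field_simp
      nlinarith
    have hdecomp : f (w + t * Complex.I) - f w =
        (f (w + t * Complex.I) - P N (w + t * Complex.I)) +
        (P N (w + t * Complex.I) - P N w) + (P N w - f w) := by ring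
    rw [hdecomp]
    calc ‖_ + _ + _‖ ≤ ‖f (w + t * Complex.I) - P N (w + t * Complex.I)‖ +
          ‖P N (w + t * Complex.I) - P N w‖ + ‖P N w - f w‖ := norm_add₃_le
      _ < m₀ / 9 + m₀ / 9 + m₀ / 9 := by
          have e1 : ‖f (w + t * Complex.I) - P N (w + t * Complex.I)‖ < m₀ / 9 := by
            rw [← dist_eq_norm]; exact h2'
          have e2 : ‖P N w - f w‖ < m₀ / 9 := by
            rw [← dist_eq_norm, dist_comm]; exact h1
          have e3 := lt_of_le_of_lt hmid hAε
          linarith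
      _ = m₀ / 3 := by ring
  -- producing zeros
  set a₀ : ℝ := |ρ.im| + r + 1 with ha₀def
  set L : ℝ := M + 2 * r + 1 with hLdef
  have hL0 : 0 < L := by simp only [hLdef]; linarith
  have hkey : ∀ j : ℕ, ∃ z : ℂ, f z = 0 ∧ |z.re - β| < δ ∧
      ρ.im + a₀ + j * L - r ≤ z.im ∧ z.im ≤ ρ.im + a₀ + j * L + M + r := by
    intro j
    obtain ⟨t, ht1, ht2, ht3⟩ := hMs (a₀ + j * L)
    have hshift' := hshift t ht3
    set g : ℂ → ℂ := fun z => f (z + t * Complex.I) with hgdef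
    have hgd : DifferentiableOn ℂ g U := by
      apply DifferentiableOn.comp hfd
        ((differentiable_id.add_const _).differentiableOn)
      intro z hz
      show 1 < (z + t * Complex.I).re
      simpa using (show 1 < z.re from hz)
    have hgsphere : ∀ z ∈ sphere ρ r, 2 * m₀ / 3 ≤ ‖g z‖ := by
      intro z hz
      have hmin : m₀ ≤ ‖f z‖ := hz₀min hz
      have hclose : ‖f (z + t * Complex.I) - f z‖ < m₀ / 3 :=
        hshift' z (sphere_subset_closedBall hz)
      have : ‖f z‖ ≤ ‖f z - g z‖ + ‖g z‖ := by
        calc ‖f z‖ = ‖(f z - g z) + g z‖ := by ring_nf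
          _ ≤ _ := norm_add_le _ _
      have hsym : ‖f z - g z‖ = ‖f (z + t * Complex.I) - f z‖ := by
        rw [norm_sub_rev]
      linarith
    have hgρ : ‖g ρ‖ < 2 * m₀ / 3 := by
      have : ‖f (ρ + t * Complex.I) - f ρ‖ < m₀ / 3 :=
        hshift' ρ (mem_closedBall_self hr0.le)
      rw [hρ, sub_zero] at this
      show ‖f (ρ + t * Complex.I)‖ < 2 * m₀ / 3
      linarith
    obtain ⟨w, hw, hgw⟩ :=
      exists_zero_of_min_modulus hUopen hgd hr0 hballU hgsphere hgρ
    refine ⟨w + t * Complex.I, hgw, ?_, ?_, ?_⟩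
    · have h2 : ‖w - ρ‖ ≤ r := by rwa [mem_closedBall, Complex.dist_eq] at hw
      have h3 : |w.re - β| ≤ r := by
        simpa [Complex.sub_re] using (Complex.abs_re_le_norm (w - ρ)).trans h2
      have : (w + t * Complex.I).re = w.re := by simp
      rw [this]
      exact lt_of_le_of_lt h3 hrδ
    · have h2 : ‖w - ρ‖ ≤ r := by rwa [mem_closedBall, Complex.dist_eq] at hw
      have h3 : |w.im - ρ.im| ≤ r := by
        simpa [Complex.sub_im] using (Complex.abs_im_le_norm (w - ρ)).trans h2
      have him : (w + t * Complex.I).im = w.im + t := by simp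
      rw [him]
      have := (abs_le.1 h3).1
      linarith
    · have h2 : ‖w - ρ‖ ≤ r := by rwa [mem_closedBall, Complex.dist_eq] at hw
      have h3 : |w.im - ρ.im| ≤ r := by
        simpa [Complex.sub_im] using (Complex.abs_im_le_norm (w - ρ)).trans h2
      have him : (w + t * Complex.I).im = w.im + t := by simp
      rw [him]
      have := (abs_le.1 h3).2
      linarith
  choose ζ hζ0 hζre hζlo hζhi using hkey
  have hζpos : ∀ j : ℕ, 0 < (ζ j).im := by
    intro j
    have h1 := hζlo j
    have h2 : -ρ.im ≤ |ρ.im| := neg_le_abs _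
    have h3 : (0 : ℝ) ≤ j * L := by positivity
    simp only [ha₀def] at h1
    linarith
  have hζmono : StrictMono fun j => (ζ j).im := by
    intro i j hij
    have h1 := hζhi i
    have h2 := hζlo j
    have hij' : (i : ℝ) + 1 ≤ (j : ℝ) := by exact_mod_cast hij
    have : (i : ℝ) * L + L ≤ (j : ℝ) * L := by nlinarith
    simp only [hLdef] at this h1 h2 ⊢
    show (ζ i).im < (ζ j).im
    linarith
  have hζinj : Function.Injective ζ := fun i j h =>
    hζmono.injective (congrArg Complex.im h)
  set C₀ : ℝ := ρ.im + a₀ + M + r with hC₀def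
  refine ⟨1 / (4 * L), by positivity, 4 * L + 2 * |C₀| + 2, fun T hT => ?_⟩
  have habsC : C₀ ≤ |C₀| := le_abs_self _
  have hT0 : 0 < T := by
    have := abs_nonneg C₀; linarith
  set Z : Set ℂ := {s : ℂ | f s = 0 ∧ |s.re - β| < δ ∧ 0 < s.im ∧ s.im < T} with hZdef
  -- Z is finite
  have hZfin : Z.Finite := by
    by_contra hinf
    replace hinf : Z.Infinite := hinf
    set K : Set ℂ := {z : ℂ | |z.re - β| ≤ δ ∧ |z.im| ≤ |T|} with hKdef
    have hKclosed : IsClosed K := by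
      apply IsClosed.inter
      · exact isClosed_le ((Complex.continuous_re.sub continuous_const).abs) continuous_const
      · exact isClosed_le (Complex.continuous_im.abs) continuous_const
    have hKbdd : Bornology.IsBounded K := by
      apply (Metric.isBounded_closedBall (x := (0 : ℂ)) (r := |β| + δ + |T|)).subset
      intro z hz
      rw [mem_closedBall, dist_zero_right]
      have h1 : |z.re| ≤ |β| + δ := by
        have := hz.1
        have h2 : |z.re| ≤ |z.re - β| + |β| := by
          calc |z.re| = |(z.re - β) + β| := by ring_nf
            _ ≤ _ := abs_add_le _ _
        linarith
      calc ‖z‖ = ‖z‖ := rfl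
        _ ≤ |z.re| + |z.im| := Complex.norm_le_abs_re_add_abs_im z
        _ ≤ (|β| + δ) + |T| := add_le_add h1 hz.2
    have hKcomp : IsCompact K := Metric.isCompact_iff_isClosed_bounded.2 ⟨hKclosed, hKbdd⟩
    have hZK : Z ⊆ K := by
      intro z hz
      obtain ⟨_, h1, h2, h3⟩ := hz
      refine ⟨h1.le, ?_⟩
      rw [abs_of_pos h2]
      exact h3.le.trans (le_abs_self T)
    obtain ⟨x, hxK, hacc⟩ := hinf.exists_accPt_of_subset_isCompact hKcomp hZK
    have hxU : x ∈ U := by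
      have := (abs_le.1 hxK.1).1
      show 1 < x.re
      simp only [hβdef] at this
      linarith
    have hfreq : ∃ᶠ z in nhdsWithin x {x}ᶜ, f z = 0 := by
      have := accPt_iff_frequently.1 hacc
      rw [frequently_nhdsWithin_iff]
      exact this.mono fun z hz => ⟨hz.2.1, hz.1⟩
    have heq : EqOn f 0 U :=
      hAna.eqOn_zero_of_preconnected_of_frequently_eq_zero hpre hxU hfreq
    exact hs₁ (heq hs₁U)
  set k : ℕ := ⌊T / (2 * L)⌋₊ with hkdef
  have himg : ζ '' ↑(Finset.range k) ⊆ Z := by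
    rintro _ ⟨j, hj, rfl⟩
    rw [Finset.mem_coe, Finset.mem_range] at hj
    refine ⟨hζ0 j, hζre j, hζpos j, ?_⟩
    have h1 := hζhi j
    have h2 : (j : ℝ) + 1 ≤ (k : ℝ) := by exact_mod_cast hj
    have h3 : (k : ℝ) ≤ T / (2 * L) := Nat.floor_le (by positivity)
    have h4 : ((j : ℝ) + 1) * L ≤ T / (2 * L) * L :=
      mul_le_mul_of_nonneg_right (h2.trans h3) hL0.le
    have heqL : T / (2 * L) * L = T / 2 := by
      field_simp
    rw [add_mul, one_mul, heqL] at h4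
    have h5 : T / 2 ≥ 2 * L + |C₀| + 1 := by linarith
    have habsC' : ρ.im + a₀ + M + r ≤ |C₀| := le_trans (le_of_eq hC₀def.symm) habsC
    have h6 : (ζ j).im ≤ |C₀| + (j : ℝ) * L := by linarith
    have h7 : (j : ℝ) * L ≤ T / 2 - L := by linarith
    have h8 : |C₀| + (T / 2 - L) < T := by linarith
    calc (ζ j).im ≤ |C₀| + (j : ℝ) * L := h6
      _ ≤ |C₀| + (T / 2 - L) := by linarith only [h7]
      _ < T := h8
  have hcard : ((ζ '' ↑(Finset.range k)).ncard : ℝ) = (k : ℝ) := by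
    rw [Set.ncard_image_of_injOn (hζinj.injOn), Set.ncard_coe_finset, Finset.card_range]
  have hle : (k : ℝ) ≤ (Z.ncard : ℝ) := by
    rw [← hcard]
    exact_mod_cast Set.ncard_le_ncard himg hZfin
  have hfloor : T / (2 * L) - 1 < (k : ℝ) := Nat.sub_one_lt_floor _
  have hk : T / (4 * L) ≤ (k : ℝ) := by
    have h4L : T / (4 * L) ≥ 1 := by
      rw [ge_iff_le, le_div_iff₀ (by positivity)]
      have := abs_nonneg C₀
      linarith
    have : T / (2 * L) = T / (4 * L) + T / (4 * L) := by
      field_simp; ring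
    linarith
  calc 1 / (4 * L) * T = T / (4 * L) := by ring
    _ ≤ (k : ℝ) := hk
    _ ≤ _ := hle
end

section
/- Fix σ > 1/2 and ε > 0. Let b_m be complex numbers with |b_m| ≤ d(m), and for n ≥ 1 let S_n = {m ≥ 1 : all prime factors of m are ≤ p_n}, where p_n is the n-th prime. Then limsup_{T→∞} (1/T) ∫₁^T |Σ_{m ∈ S_n, m > p_n} b_m m^{−σ−it}|² dt ≤ C p_n^{1−2σ+ε} for a constant C depending only on σ and ε. -/
open MeasureTheory Filter Set Complex Topology Finset



lemma divisor_bound {δ : ℝ} (hδ : 0 < δ) :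
    ∃ C : ℝ, 1 ≤ C ∧ ∀ m : ℕ, 1 ≤ m → (m.divisors.card : ℝ) ≤ C * (m : ℝ) ^ δ := by
  set x : ℝ := min 1 (δ * Real.log 2) with hxdef
  have hx0 : 0 < x := lt_min one_pos (mul_pos hδ (Real.log_pos one_lt_two))
  have hx1 : x ≤ 1 := min_le_left _ _
  have hxlog : x ≤ δ * Real.log 2 := min_le_right _ _
  set K : ℝ := 1 / x with hKdef
  have hK1 : 1 ≤ K := by rw [hKdef, le_div_iff₀ hx0, one_mul]; exact hx1
  set M : ℕ := ⌈(2:ℝ) ^ (1/δ)⌉₊ with hMdef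
  refine ⟨K ^ M, one_le_pow₀ hK1, fun m hm => ?_⟩
  have hm0 : m ≠ 0 := by omega
  -- per-prime key bound
  have key : ∀ p ∈ m.primeFactors,
      ((m.factorization p : ℝ) + 1) ≤ (if p < M then K else 1) *
        ((p : ℝ) ^ (m.factorization p : ℕ)) ^ δ := by
    intro p hp
    have hpp : p.Prime := Nat.prime_of_mem_primeFactors hp
    have hp2 : (2:ℝ) ≤ (p:ℝ) := by exact_mod_cast hpp.two_le
    set a : ℕ := m.factorization p
    have hrw : ((p : ℝ) ^ a) ^ δ = ((p:ℝ) ^ δ) ^ a := by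
      rw [← Real.rpow_natCast ((p:ℝ) ^ δ) a, ← Real.rpow_natCast (p:ℝ) a,
        ← Real.rpow_mul (by positivity), ← Real.rpow_mul (by positivity), mul_comm]
    by_cases hpM : p < M
    · rw [if_pos hpM, hrw]
      have h1 : (a : ℝ) + 1 ≤ K * (1 + a * x) := by
        rw [hKdef, div_mul_eq_mul_div, le_div_iff₀ hx0]
        nlinarith [Nat.cast_nonneg (α := ℝ) a]
      have h2 : 1 + (a:ℝ) * x ≤ Real.exp (a * x) := by
        have := Real.add_one_le_exp ((a:ℝ) * x)
        linarith
      have h3 : Real.exp ((a:ℝ) * x) ≤ ((p:ℝ) ^ δ) ^ a := by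
        have e1 : Real.exp ((a:ℝ) * x) ≤ Real.exp ((a:ℝ) * (δ * Real.log 2)) := by
          apply Real.exp_le_exp.mpr
          exact mul_le_mul_of_nonneg_left hxlog (Nat.cast_nonneg a)
        have e2 : Real.exp ((a:ℝ) * (δ * Real.log 2)) = ((2:ℝ) ^ δ) ^ a := by
          rw [Real.exp_nat_mul, Real.rpow_def_of_pos (by norm_num : (0:ℝ) < 2), mul_comm]
        have e3 : ((2:ℝ) ^ δ) ^ a ≤ ((p:ℝ) ^ δ) ^ a := by
          apply pow_le_pow_left₀ (by positivity)
          exact Real.rpow_le_rpow (by norm_num) hp2 hδ.le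
        calc Real.exp ((a:ℝ) * x) ≤ Real.exp ((a:ℝ) * (δ * Real.log 2)) := e1
          _ = ((2:ℝ) ^ δ) ^ a := e2
          _ ≤ ((p:ℝ) ^ δ) ^ a := e3
      calc (a : ℝ) + 1 ≤ K * (1 + a * x) := h1
        _ ≤ K * ((p:ℝ) ^ δ) ^ a := by
            apply mul_le_mul_of_nonneg_left _ (by linarith)
            exact h2.trans h3
    · rw [if_neg hpM, one_mul, hrw]
      have hMp : ((2:ℝ) ^ (1/δ)) ≤ (p : ℝ) := by
        have : M ≤ p := le_of_not_gt hpM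
        calc (2:ℝ) ^ (1/δ) ≤ (M : ℝ) := Nat.le_ceil _
          _ ≤ (p : ℝ) := by exact_mod_cast this
      have h2p : (2:ℝ) ≤ (p:ℝ) ^ δ := by
        have := Real.rpow_le_rpow (by positivity) hMp hδ.le
        rwa [← Real.rpow_mul (by norm_num : (0:ℝ) ≤ 2), one_div_mul_cancel hδ.ne',
          Real.rpow_one] at this
      have h1 : (a:ℝ) + 1 ≤ (2:ℝ) ^ a := by
        have := Nat.lt_two_pow_self (n := a)
        have : (a:ℝ) + 1 ≤ ((2:ℕ) ^ a : ℕ) := by exact_mod_cast this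
        simpa using this
      calc (a:ℝ) + 1 ≤ (2:ℝ) ^ a := h1
        _ ≤ ((p:ℝ) ^ δ) ^ a := pow_le_pow_left₀ (by norm_num) h2p a
  -- combine
  have hcard : (m.divisors.card : ℝ) = ∏ p ∈ m.primeFactors, ((m.factorization p : ℝ) + 1) := by
    rw [Nat.card_divisors hm0]
    push_cast
    rfl
  have hprod : ∏ p ∈ m.primeFactors, ((p : ℝ) ^ (m.factorization p : ℕ)) ^ δ = (m : ℝ) ^ δ := by
    rw [Real.finset_prod_rpow _ _ (fun i _ => by positivity)]
    congr 1
    have := Nat.factorization_prod_pow_eq_self hm0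
    rw [Finsupp.prod] at this
    rw [Nat.support_factorization] at this
    exact_mod_cast congrArg (Nat.cast (R := ℝ)) this
  calc (m.divisors.card : ℝ)
      = ∏ p ∈ m.primeFactors, ((m.factorization p : ℝ) + 1) := hcard
    _ ≤ ∏ p ∈ m.primeFactors,
        ((if p < M then K else 1) * ((p : ℝ) ^ (m.factorization p : ℕ)) ^ δ) := by
        apply Finset.prod_le_prod (fun i _ => by positivity) key
    _ = (∏ p ∈ m.primeFactors, if p < M then K else 1) *
        ∏ p ∈ m.primeFactors, ((p : ℝ) ^ (m.factorization p : ℕ)) ^ δ :=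
        Finset.prod_mul_distrib
    _ ≤ K ^ M * (m : ℝ) ^ δ := by
        rw [hprod]
        apply mul_le_mul_of_nonneg_right _ (by positivity)
        rw [Finset.prod_ite, Finset.prod_const, Finset.prod_const_one, mul_one]
        apply pow_le_pow_right₀ hK1
        calc (Finset.filter (fun p => p < M) m.primeFactors).card
            ≤ (Finset.range M).card := by
              apply Finset.card_le_card
              intro p hp
              simp only [Finset.mem_filter] at hp
              exact Finset.mem_range.mpr hp.2
          _ = M := Finset.card_range M

lemma summable_smooth_rpow {r : ℝ} (hr : 0 < r) (N : ℕ) :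
    Summable (Set.indicator (Nat.smoothNumbers N) (fun m => (m:ℝ) ^ (-r))) := by
  rw [← summable_subtype_iff_indicator]
  have h := (EulerProduct.summable_and_hasSum_smoothNumbers_prod_primesBelow_tsum
      (f := fun m : ℕ => (m:ℝ) ^ (-r)) (by norm_num)
      (fun {p q} _ => by push_cast; rw [Real.mul_rpow (by positivity) (by positivity)])
      (fun {p} hp => ?_) N).1
  · apply h.congr
    intro m
    exact Real.norm_of_nonneg (by positivity)
  · have hp1 : (1:ℝ) < (p:ℝ) := by exact_mod_cast hp.one_lt
    have : ∀ k : ℕ, ‖((p ^ k : ℕ) : ℝ) ^ (-r)‖ = ((p:ℝ) ^ (-r)) ^ k := by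
      intro k
      rw [Real.norm_of_nonneg (by positivity)]
      push_cast
      rw [← Real.rpow_natCast ((p:ℝ) ^ (-r)) k, ← Real.rpow_natCast (p:ℝ) k,
        ← Real.rpow_mul (by positivity), ← Real.rpow_mul (by positivity), mul_comm]
    rw [show (fun n : ℕ => ‖((p ^ n : ℕ) : ℝ) ^ (-r)‖) = fun n => ((p:ℝ) ^ (-r)) ^ n from
      funext this]
    apply summable_geometric_of_lt_one (by positivity)
    rw [Real.rpow_neg (by positivity)]
    rw [inv_lt_one_iff₀]
    right
    exact Real.one_lt_rpow_iff_of_pos (by positivity) |>.mpr (Or.inl ⟨hp1, hr⟩)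


lemma neg_exp_ne_zero (σ t : ℝ) (hσ : σ ≠ 0) : -((σ : ℂ) + t * Complex.I) ≠ 0 := by
  intro h
  apply hσ
  have := congrArg Complex.re h
  simpa using this

lemma norm_nat_cpow (m : ℕ) (σ t : ℝ) (hσ : σ ≠ 0) :
    ‖(m : ℂ) ^ (-((σ : ℂ) + t * Complex.I))‖ = (m : ℝ) ^ (-σ) := by
  rcases Nat.eq_zero_or_pos m with rfl | hm
  · rw [Nat.cast_zero, Complex.zero_cpow (neg_exp_ne_zero σ t hσ)]
    simp [Real.zero_rpow (neg_ne_zero.mpr hσ)]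
  · have hm' : (0:ℝ) < m := by exact_mod_cast hm
    rw [show ((m:ℕ):ℂ) = ((m:ℝ):ℂ) by push_cast; ring]
    rw [Complex.norm_cpow_eq_rpow_re_of_pos hm']
    congr 1
    simp

lemma cont_cpow (m : ℕ) (σ : ℝ) (hσ : σ ≠ 0) :
    Continuous (fun t : ℝ => (m : ℂ) ^ (-((σ : ℂ) + t * Complex.I))) := by
  rcases Nat.eq_zero_or_pos m with rfl | hm
  · have : (fun t : ℝ => ((0:ℕ) : ℂ) ^ (-((σ : ℂ) + t * Complex.I))) = fun _ => 0 := by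
      funext t
      rw [Nat.cast_zero, Complex.zero_cpow (neg_exp_ne_zero σ t hσ)]
    rw [this]; exact continuous_const
  · have hm0 : (m : ℂ) ≠ 0 := by exact_mod_cast (Nat.cast_pos.mpr hm).ne'
    have : (fun t : ℝ => (m : ℂ) ^ (-((σ : ℂ) + t * Complex.I))) =
        fun t : ℝ => Complex.exp (Complex.log m * (-((σ : ℂ) + t * Complex.I))) := by
      funext t
      exact Complex.cpow_def_of_ne_zero hm0 _
    rw [this]
    exact Complex.continuous_exp.comp (by continuity)

noncomputable def uu (σ : ℝ) (c : ℕ → ℂ) (t : ℝ) (m : ℕ) : ℂ :=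
  c m * (m : ℂ) ^ (-((σ : ℂ) + t * Complex.I))

noncomputable def ww (σ : ℝ) (c : ℕ → ℂ) (m : ℕ) : ℝ :=
  ‖c m‖ * (m : ℝ) ^ (-σ)

noncomputable def AA (σ : ℝ) (c : ℕ → ℂ) (q : ℕ × ℕ) (t : ℝ) : ℂ :=
  uu σ c t q.1 * (starRingEnd ℂ) (uu σ c t q.2)

lemma ww_nonneg (σ : ℝ) (c : ℕ → ℂ) (m : ℕ) : 0 ≤ ww σ c m := by
  unfold ww; positivity

lemma norm_uu (σ : ℝ) (hσ : σ ≠ 0) (c : ℕ → ℂ) (t : ℝ) (m : ℕ) :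
    ‖uu σ c t m‖ = ww σ c m := by
  unfold uu ww
  rw [norm_mul, norm_nat_cpow m σ t hσ]

lemma norm_AA (σ : ℝ) (hσ : σ ≠ 0) (c : ℕ → ℂ) (q : ℕ × ℕ) (t : ℝ) :
    ‖AA σ c q t‖ = ww σ c q.1 * ww σ c q.2 := by
  unfold AA
  rw [norm_mul, RCLike.norm_conj, norm_uu σ hσ, norm_uu σ hσ]

lemma cont_AA (σ : ℝ) (hσ : σ ≠ 0) (c : ℕ → ℂ) (q : ℕ × ℕ) :
    Continuous (AA σ c q) := by
  have cu : ∀ m : ℕ, Continuous (fun t => uu σ c t m) := by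
    intro m
    unfold uu
    exact continuous_const.mul (cont_cpow m σ hσ)
  unfold AA
  exact (cu q.1).mul (Complex.continuous_conj.comp (cu q.2))

lemma claim1 (σ : ℝ) (hσ : σ ≠ 0) (c : ℕ → ℂ) (hw : Summable (ww σ c)) (t : ℝ) :
    ‖∑' m : ℕ, uu σ c t m‖ ^ 2 = ∑' q : ℕ × ℕ, (AA σ c q t).re := by
  have hn : Summable (fun m => ‖uu σ c t m‖) := by
    apply hw.congr; intro m; exact (norm_uu σ hσ c t m).symm
  have hn' : Summable (fun m => ‖(starRingEnd ℂ) (uu σ c t m)‖) := by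
    apply hn.congr; intro m; rw [RCLike.norm_conj]
  have h1 : (‖∑' m : ℕ, uu σ c t m‖ : ℝ) ^ 2
      = ((∑' m : ℕ, uu σ c t m) * (starRingEnd ℂ) (∑' m : ℕ, uu σ c t m)).re := by
    rw [Complex.mul_conj]
    rw [Complex.ofReal_re]
    rw [Complex.normSq_eq_norm_sq]
  rw [h1]
  have h2 : (starRingEnd ℂ) (∑' m : ℕ, uu σ c t m)
      = ∑' m : ℕ, (starRingEnd ℂ) (uu σ c t m) := by
    exact tsum_star
  rw [h2, tsum_mul_tsum_of_summable_norm hn hn']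
  have hs : Summable fun q : ℕ × ℕ => uu σ c t q.1 * (starRingEnd ℂ) (uu σ c t q.2) := by
    apply summable_mul_of_summable_norm hn hn'
  exact Complex.re_tsum hs

lemma claim2 (σ : ℝ) (hσ : σ ≠ 0) (c : ℕ → ℂ) (hw : Summable (ww σ c)) (T : ℝ) (hT : 1 ≤ T) :
    (1/T) * ∫ t in (1:ℝ)..T, ‖∑' m : ℕ, uu σ c t m‖ ^ 2
      = ∑' q : ℕ × ℕ, (1/T) * ∫ t in (1:ℝ)..T, (AA σ c q t).re := by
  have hww : Summable fun q : ℕ × ℕ => ww σ c q.1 * ww σ c q.2 :=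
    hw.mul_of_nonneg hw (ww_nonneg σ c) (ww_nonneg σ c)
  have hmeas : ∀ q : ℕ × ℕ, AEStronglyMeasurable (fun t => (AA σ c q t).re)
      (volume.restrict (Set.Ioc (1:ℝ) T)) :=
    fun q => (Complex.continuous_re.comp (cont_AA σ hσ c q)).aestronglyMeasurable
  have hptw : ∀ q : ℕ × ℕ, ∀ t : ℝ, ‖(AA σ c q t).re‖ ≤ ‖ww σ c q.1 * ww σ c q.2‖ := by
    intro q t
    rw [Real.norm_eq_abs, Real.norm_eq_abs]
    calc |(AA σ c q t).re| ≤ ‖AA σ c q t‖ := Complex.abs_re_le_norm _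
      _ = ww σ c q.1 * ww σ c q.2 := by rw [norm_AA σ hσ]
      _ ≤ |ww σ c q.1 * ww σ c q.2| := le_abs_self _
  have hlint : ∀ q : ℕ × ℕ, (∫⁻ t in Set.Ioc (1:ℝ) T, ‖(AA σ c q t).re‖₊)
      ≤ (‖ww σ c q.1 * ww σ c q.2‖₊ : ENNReal) * volume (Set.Ioc (1:ℝ) T) := by
    intro q
    rw [← setLIntegral_const]
    apply lintegral_mono
    intro t
    apply ENNReal.coe_le_coe.mpr
    apply NNReal.coe_le_coe.mp
    rw [coe_nnnorm, coe_nnnorm]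
    exact hptw q t
  have hfin : (∑' q : ℕ × ℕ, ∫⁻ t in Set.Ioc (1:ℝ) T, ‖(AA σ c q t).re‖₊) ≠ ⊤ := by
    apply ne_top_of_le_ne_top _ (ENNReal.tsum_le_tsum hlint)
    rw [ENNReal.tsum_mul_right]
    apply ENNReal.mul_ne_top
    · rw [ENNReal.tsum_coe_ne_top_iff_summable]
      rw [← NNReal.summable_coe]
      apply Summable.congr hww.abs
      intro q
      rw [coe_nnnorm, Real.norm_eq_abs]
    · rw [Real.volume_Ioc]
      exact ENNReal.ofReal_ne_top
  have hfe : (fun t : ℝ => ‖∑' m : ℕ, uu σ c t m‖ ^ 2)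
      = fun t => ∑' q : ℕ × ℕ, (AA σ c q t).re := funext (claim1 σ hσ c hw)
  rw [hfe, intervalIntegral.integral_of_le hT, MeasureTheory.integral_tsum hmeas hfin,
    ← tsum_mul_left]
  congr 1
  funext q
  rw [intervalIntegral.integral_of_le hT]

lemma claim3 (σ : ℝ) (hσ : σ ≠ 0) (c : ℕ → ℂ) (T : ℝ) (hT : 1 ≤ T) (q : ℕ × ℕ) :
    ‖(1/T) * ∫ t in (1:ℝ)..T, (AA σ c q t).re‖ ≤ ww σ c q.1 * ww σ c q.2 := by
  have hT0 : 0 < T := by linarith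
  have hint : ‖∫ t in (1:ℝ)..T, (AA σ c q t).re‖ ≤ (ww σ c q.1 * ww σ c q.2) * |T - 1| := by
    apply intervalIntegral.norm_integral_le_of_norm_le_const
    intro t _
    rw [Real.norm_eq_abs]
    calc |(AA σ c q t).re| ≤ ‖AA σ c q t‖ := Complex.abs_re_le_norm _
      _ = ww σ c q.1 * ww σ c q.2 := by rw [norm_AA σ hσ]
  rw [norm_mul, Real.norm_eq_abs, abs_of_pos (by positivity : (0:ℝ) < 1/T)]
  have hww : 0 ≤ ww σ c q.1 * ww σ c q.2 :=
    mul_nonneg (ww_nonneg σ c _) (ww_nonneg σ c _)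
  calc (1/T) * ‖∫ t in (1:ℝ)..T, (AA σ c q t).re‖
      ≤ (1/T) * ((ww σ c q.1 * ww σ c q.2) * |T - 1|) := by
        apply mul_le_mul_of_nonneg_left hint (by positivity)
    _ ≤ ww σ c q.1 * ww σ c q.2 := by
        rw [_root_.abs_of_nonneg (by linarith : (0:ℝ) ≤ T - 1)]
        rw [div_mul_eq_mul_div, one_mul, div_le_iff₀ hT0]
        nlinarith

lemma tendsto_avg_const (w : ℝ) :
    Tendsto (fun T : ℝ => (1/T) * ((T - 1) * w)) atTop (𝓝 w) := by
  have h1 : (fun T : ℝ => w - w * (1/T)) =ᶠ[atTop] fun T : ℝ => (1/T) * ((T - 1) * w) := by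
    filter_upwards [eventually_ge_atTop (1:ℝ)] with T hT
    have hT0 : T ≠ 0 := by linarith
    field_simp
  have h2 : Tendsto (fun T : ℝ => w - w * (1/T)) atTop (𝓝 w) := by
    have h3 : Tendsto (fun T : ℝ => w * (1/T)) atTop (𝓝 0) := by
      simpa [one_div] using (tendsto_inv_atTop_zero (𝕜 := ℝ)).const_mul w
    simpa using tendsto_const_nhds.sub h3
  exact h2.congr' h1

lemma uu_eq_exp (σ : ℝ) (c : ℕ → ℂ) (t : ℝ) (m : ℕ) (hm : 1 ≤ m) :
    uu σ c t m = c m * Complex.exp ((Real.log m : ℂ) * (-((σ:ℂ) + t * Complex.I))) := by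
  have hm0 : (m : ℂ) ≠ 0 := by
    exact_mod_cast Nat.cast_ne_zero.mpr (by omega)
  unfold uu
  rw [Complex.cpow_def_of_ne_zero hm0, Complex.natCast_log]

lemma conj_uu_eq_exp (σ : ℝ) (c : ℕ → ℂ) (t : ℝ) (k : ℕ) (hk : 1 ≤ k) :
    (starRingEnd ℂ) (uu σ c t k) =
      (starRingEnd ℂ) (c k) * Complex.exp ((Real.log k : ℂ) * (-(σ:ℂ) + t * Complex.I)) := by
  rw [uu_eq_exp σ c t k hk, map_mul, ← Complex.exp_conj]
  congr 1
  simp only [map_mul, map_neg, map_add, Complex.conj_ofReal, Complex.conj_I]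
  ring

lemma AA_diag_re (σ : ℝ) (hσ : σ ≠ 0) (c : ℕ → ℂ) (m : ℕ) (t : ℝ) :
    (AA σ c (m, m) t).re = (ww σ c m) ^ 2 := by
  unfold AA
  rw [Complex.mul_conj, Complex.ofReal_re, Complex.normSq_eq_norm_sq,
    norm_uu σ hσ]

lemma claim4_diag (σ : ℝ) (hσ : σ ≠ 0) (c : ℕ → ℂ) (m : ℕ) :
    Tendsto (fun T : ℝ => (1/T) * ∫ t in (1:ℝ)..T, (AA σ c (m, m) t).re) atTop
      (𝓝 ((ww σ c m) ^ 2)) := by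
  have h : (fun T : ℝ => (1/T) * ∫ t in (1:ℝ)..T, (AA σ c (m, m) t).re)
      = fun T : ℝ => (1/T) * ((T - 1) * (ww σ c m) ^ 2) := by
    funext T
    congr 1
    rw [show (fun t : ℝ => (AA σ c (m, m) t).re) = fun _ : ℝ => (ww σ c m) ^ 2 from
      funext (AA_diag_re σ hσ c m)]
    rw [intervalIntegral.integral_const, smul_eq_mul]
  rw [h]
  exact tendsto_avg_const _

lemma uu_zero (σ t : ℝ) (hσ : σ ≠ 0) (c : ℕ → ℂ) : uu σ c t 0 = 0 := by
  unfold uu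
  rw [Nat.cast_zero, Complex.zero_cpow (neg_exp_ne_zero σ t hσ), mul_zero]

lemma AA_zero_left (σ t : ℝ) (hσ : σ ≠ 0) (c : ℕ → ℂ) (k : ℕ) :
    AA σ c (0, k) t = 0 := by
  unfold AA
  rw [show (0, k).1 = 0 from rfl, uu_zero σ t hσ c, zero_mul]

lemma AA_zero_right (σ t : ℝ) (hσ : σ ≠ 0) (c : ℕ → ℂ) (m : ℕ) :
    AA σ c (m, 0) t = 0 := by
  unfold AA
  rw [show (m, 0).2 = 0 from rfl, uu_zero σ t hσ c, map_zero, mul_zero]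

lemma claim4_offdiag (σ : ℝ) (hσ : σ ≠ 0) (c : ℕ → ℂ) (m k : ℕ) (hm : 1 ≤ m) (hk : 1 ≤ k)
    (hmk : m ≠ k) :
    Tendsto (fun T : ℝ => (1/T) * ∫ t in (1:ℝ)..T, (AA σ c (m, k) t).re) atTop (𝓝 0) := by
  set Lm : ℂ := (Real.log m : ℂ) with hLm
  set Lk : ℂ := (Real.log k : ℂ) with hLk
  set cc : ℂ := Complex.I * (Lk - Lm) with hcc
  set K0 : ℂ := c m * (starRingEnd ℂ) (c k) * Complex.exp (-(σ:ℂ) * (Lm + Lk)) with hK0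
  have hlog : Real.log m ≠ Real.log k := by
    intro h
    apply hmk
    have h1 : (m:ℝ) = (k:ℝ) := by
      have hm' : (0:ℝ) < m := by exact_mod_cast hm
      have hk' : (0:ℝ) < k := by exact_mod_cast hk
      rw [← Real.exp_log hm', ← Real.exp_log hk', h]
    exact_mod_cast h1
  have hccne : cc ≠ 0 := by
    rw [hcc]
    apply mul_ne_zero Complex.I_ne_zero
    rw [sub_ne_zero, hLk, hLm]
    exact fun h => hlog (by exact_mod_cast h.symm)
  have hA : ∀ t : ℝ, AA σ c (m, k) t = K0 * Complex.exp (cc * t) := by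
    intro t
    unfold AA
    rw [uu_eq_exp σ c t m hm, conj_uu_eq_exp σ c t k hk]
    have hexps : Lm * (-((σ:ℂ) + t * Complex.I)) + Lk * (-(σ:ℂ) + t * Complex.I)
        = -(σ:ℂ) * (Lm + Lk) + cc * t := by
      rw [hcc]; ring
    calc c m * Complex.exp (Lm * (-((σ:ℂ) + t * Complex.I))) *
          ((starRingEnd ℂ) (c k) * Complex.exp (Lk * (-(σ:ℂ) + t * Complex.I)))
        = c m * (starRingEnd ℂ) (c k) *
            Complex.exp (Lm * (-((σ:ℂ) + t * Complex.I)) + Lk * (-(σ:ℂ) + t * Complex.I)) := by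
          rw [Complex.exp_add]; ring
      _ = K0 * Complex.exp (cc * t) := by
          rw [hexps, Complex.exp_add, hK0]; ring
  have hInt : ∀ T : ℝ, (∫ t in (1:ℝ)..T, AA σ c (m, k) t)
      = K0 * ((Complex.exp (cc * T) - Complex.exp (cc * ((1:ℝ):ℂ))) / cc) := by
    intro T
    rw [show (fun t : ℝ => AA σ c (m, k) t) = fun t : ℝ => K0 * Complex.exp (cc * t) from
      funext hA]
    rw [intervalIntegral.integral_const_mul]
    congr 1
    rw [integral_exp_mul_complex hccne]
  have hre : ∀ T : ℝ, (∫ t in (1:ℝ)..T, (AA σ c (m, k) t).re)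
      = (∫ t in (1:ℝ)..T, AA σ c (m, k) t).re := by
    intro T
    have hii : IntervalIntegrable (AA σ c (m, k)) volume 1 T :=
      (cont_AA σ hσ c (m, k)).intervalIntegrable 1 T
    have := (Complex.reCLM).intervalIntegral_comp_comm hii
    simpa using this
  have hbound : ∀ T : ℝ, 1 ≤ T →
      ‖(1/T) * ∫ t in (1:ℝ)..T, (AA σ c (m, k) t).re‖ ≤ (‖K0‖ * (2 / ‖cc‖)) * (1/T) := by
    intro T hT
    have hT0 : 0 < T := by linarith
    have he : ∀ s : ℝ, ‖Complex.exp (cc * (s:ℂ))‖ = 1 := by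
      intro s
      rw [Complex.norm_exp]
      have hres : (cc * (s:ℂ)).re = 0 := by
        have : cc * (s:ℂ) = (((Real.log k - Real.log m) * s : ℝ) : ℂ) * Complex.I := by
          rw [hcc, hLk, hLm]; push_cast; ring
        rw [this, Complex.re_ofReal_mul, Complex.I_re, mul_zero]
      rw [hres, Real.exp_zero]
    rw [hre, hInt, norm_mul, Real.norm_eq_abs, _root_.abs_of_pos (by positivity : (0:ℝ) < 1/T)]
    rw [mul_comm]
    apply mul_le_mul_of_nonneg_right _ (by positivity)
    calc |(K0 * ((Complex.exp (cc * T) - Complex.exp (cc * ((1:ℝ):ℂ))) / cc)).re|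
        ≤ ‖K0 * ((Complex.exp (cc * T) - Complex.exp (cc * ((1:ℝ):ℂ))) / cc)‖ :=
          Complex.abs_re_le_norm _
      _ = ‖K0‖ * (‖Complex.exp (cc * T) - Complex.exp (cc * ((1:ℝ):ℂ))‖ / ‖cc‖) := by
          rw [norm_mul, norm_div]
      _ ≤ ‖K0‖ * (2 / ‖cc‖) := by
          gcongr
          calc ‖Complex.exp (cc * T) - Complex.exp (cc * ((1:ℝ):ℂ))‖
              ≤ ‖Complex.exp (cc * (T:ℂ))‖ + ‖Complex.exp (cc * ((1:ℝ):ℂ))‖ := norm_sub_le _ _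
            _ = 2 := by rw [he T, he 1]; norm_num
  have hzero : Tendsto (fun T : ℝ => (‖K0‖ * (2 / ‖cc‖)) * (1/T)) atTop (𝓝 0) := by
    simpa [one_div] using (tendsto_inv_atTop_zero (𝕜 := ℝ)).const_mul (‖K0‖ * (2 / ‖cc‖))
  apply squeeze_zero_norm' _ hzero
  filter_upwards [eventually_ge_atTop (1:ℝ)] with T hT using hbound T hT

lemma mean_value (σ : ℝ) (hσ : σ ≠ 0) (c : ℕ → ℂ) (hw : Summable (ww σ c)) :
    Tendsto (fun T : ℝ => (1/T) * ∫ t in (1:ℝ)..T, ‖∑' m : ℕ, uu σ c t m‖ ^ 2) atTop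
      (𝓝 (∑' m : ℕ, (ww σ c m) ^ 2)) := by
  have hww : Summable fun q : ℕ × ℕ => ww σ c q.1 * ww σ c q.2 :=
    hw.mul_of_nonneg hw (ww_nonneg σ c) (ww_nonneg σ c)
  set G : ℕ × ℕ → ℝ := fun q => if q.1 = q.2 then (ww σ c q.1) ^ 2 else 0 with hG
  have hlim : ∀ q : ℕ × ℕ,
      Tendsto (fun T : ℝ => (1/T) * ∫ t in (1:ℝ)..T, (AA σ c q t).re) atTop (𝓝 (G q)) := by
    rintro ⟨m, k⟩
    by_cases hmk : m = k
    · subst hmk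
      rw [show G (m, m) = (ww σ c m) ^ 2 from if_pos rfl]
      exact claim4_diag σ hσ c m
    · rw [show G (m, k) = 0 from if_neg hmk]
      rcases Nat.eq_zero_or_pos m with rfl | hm
      · have hz : (fun T : ℝ => (1/T) * ∫ t in (1:ℝ)..T, (AA σ c (0, k) t).re)
            = fun _ : ℝ => 0 := by
          funext T
          rw [show (fun t : ℝ => (AA σ c (0, k) t).re) = fun _ : ℝ => (0:ℝ) from
            funext fun t => by rw [AA_zero_left σ t hσ c k, Complex.zero_re]]
          rw [intervalIntegral.integral_const]
          simp
        rw [hz]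
        exact tendsto_const_nhds
      · rcases Nat.eq_zero_or_pos k with rfl | hk
        · have hz : (fun T : ℝ => (1/T) * ∫ t in (1:ℝ)..T, (AA σ c (m, 0) t).re)
              = fun _ : ℝ => 0 := by
            funext T
            rw [show (fun t : ℝ => (AA σ c (m, 0) t).re) = fun _ : ℝ => (0:ℝ) from
              funext fun t => by rw [AA_zero_right σ t hσ c m, Complex.zero_re]]
            rw [intervalIntegral.integral_const]
            simp
          rw [hz]
          exact tendsto_const_nhds
        · exact claim4_offdiag σ hσ c m k hm hk hmk
  have hbound : ∀ᶠ T : ℝ in atTop, ∀ q : ℕ × ℕ,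
      ‖(1/T) * ∫ t in (1:ℝ)..T, (AA σ c q t).re‖ ≤ ww σ c q.1 * ww σ c q.2 := by
    filter_upwards [eventually_ge_atTop (1:ℝ)] with T hT
    exact claim3 σ hσ c T hT
  have hDC := tendsto_tsum_of_dominated_convergence
    (f := fun (T : ℝ) (q : ℕ × ℕ) => (1/T) * ∫ t in (1:ℝ)..T, (AA σ c q t).re)
    hww hlim hbound
  have hdiag : (∑' q : ℕ × ℕ, G q) = ∑' m : ℕ, (ww σ c m) ^ 2 := by
    have hinj : Function.Injective (fun m : ℕ => ((m, m) : ℕ × ℕ)) := by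
      intro a b h
      exact (Prod.ext_iff.mp h).1
    have hsupp : Function.support G ⊆ Set.range (fun m : ℕ => ((m, m) : ℕ × ℕ)) := by
      intro q hq
      by_cases h : q.1 = q.2
      · exact ⟨q.1, Prod.ext rfl h⟩
      · exact absurd (if_neg h) hq
    rw [← Function.Injective.tsum_eq hinj hsupp]
    congr 1
    funext m
    exact if_pos rfl
  rw [hdiag] at hDC
  apply hDC.congr'
  filter_upwards [eventually_ge_atTop (1:ℝ)] with T hT
  exact (claim2 σ hσ c hw T hT).symm

theorem smooth_number_tail_mean_value (σ ε : ℝ) (hσ : 1 / 2 < σ) (hε : 0 < ε)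
    (b : ℕ → ℂ) (hb : ∀ m : ℕ, 1 ≤ m → ‖b m‖ ≤ (m.divisors.card : ℝ)) :
    ∃ C : ℝ, ∀ n : ℕ, 1 ≤ n →
      Filter.limsup (fun T : ℝ => (1 / T) * ∫ t in (1:ℝ)..T,
          ‖∑' m : ℕ,
            Set.indicator
              {m : ℕ | Nat.nth Nat.Prime (n - 1) < m ∧
                ∀ q : ℕ, q.Prime → q ∣ m → q ≤ Nat.nth Nat.Prime (n - 1)}
              (fun m => b m * (m : ℂ) ^ (-((σ : ℂ) + t * Complex.I))) m‖ ^ 2) atTop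
        ≤ C * (Nat.nth Nat.Prime (n - 1) : ℝ) ^ (1 - 2 * σ + ε) := by
  have hσ0 : 0 < σ := by linarith
  set δ : ℝ := min ε (2 * σ - 1) / 6 with hδdef
  have hδ : 0 < δ := by
    apply div_pos _ (by norm_num)
    exact lt_min hε (by linarith)
  have hδε : δ ≤ ε / 6 := by
    have := min_le_left ε (2 * σ - 1)
    rw [hδdef]
    linarith
  have hδσ : δ ≤ (2 * σ - 1) / 6 := by
    have := min_le_right ε (2 * σ - 1)
    rw [hδdef]
    linarith
  obtain ⟨Cd, hCd1, hCd⟩ := divisor_bound hδ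
  have hsum1 : Summable (fun m : ℕ => (m:ℝ) ^ (-(1 + δ))) := by
    rw [Real.summable_nat_rpow]
    linarith
  set Z : ℝ := ∑' m : ℕ, (m:ℝ) ^ (-(1 + δ)) with hZdef
  have hZ0 : 0 ≤ Z :=
    tsum_nonneg (fun m => Real.rpow_nonneg (Nat.cast_nonneg m) _)
  refine ⟨Cd ^ 2 * Z, fun n hn => ?_⟩
  set P : ℕ := Nat.nth Nat.Prime (n - 1) with hPdef
  have hPp : P.Prime := Nat.prime_nth_prime _
  have hP2 : 2 ≤ P := hPp.two_le
  have hP0 : (0:ℝ) < P := by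
    have : 0 < P := by omega
    exact_mod_cast this
  have hP1 : (1:ℝ) ≤ P := by
    have : 1 ≤ P := by omega
    exact_mod_cast this
  set S : Set ℕ := {m : ℕ | P < m ∧ ∀ q : ℕ, q.Prime → q ∣ m → q ≤ P} with hSdef
  set c : ℕ → ℂ := S.indicator b with hcdef
  have hmemS : ∀ m : ℕ, m ∈ S → P < m ∧ ∀ q : ℕ, q.Prime → q ∣ m → q ≤ P := by
    intro m hm
    rwa [hSdef, Set.mem_setOf_eq] at hm
  have hind : ∀ t : ℝ, ∀ m : ℕ,
      Set.indicator S (fun m => b m * (m : ℂ) ^ (-((σ : ℂ) + t * Complex.I))) m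
        = uu σ c t m := by
    intro t m
    by_cases hm : m ∈ S
    · rw [Set.indicator_of_mem hm]
      unfold uu
      rw [hcdef, Set.indicator_of_mem hm]
    · rw [Set.indicator_of_notMem hm]
      unfold uu
      rw [hcdef, Set.indicator_of_notMem hm, zero_mul]
  have hfun : (fun T : ℝ => (1 / T) * ∫ t in (1:ℝ)..T,
      ‖∑' m : ℕ, Set.indicator S
        (fun m => b m * (m : ℂ) ^ (-((σ : ℂ) + t * Complex.I))) m‖ ^ 2)
      = fun T : ℝ => (1 / T) * ∫ t in (1:ℝ)..T, ‖∑' m : ℕ, uu σ c t m‖ ^ 2 := by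
    funext T
    congr 1
    apply intervalIntegral.integral_congr
    intro t _
    exact congrArg (fun z : ℂ => ‖z‖ ^ 2) (tsum_congr (hind t))
  have hσδ : 0 < σ - δ := by linarith
  have hwle : ∀ m : ℕ, ww σ c m
      ≤ Cd * Set.indicator (Nat.smoothNumbers (P + 1)) (fun m => (m:ℝ) ^ (-(σ - δ))) m := by
    intro m
    by_cases hm : m ∈ S
    · obtain ⟨hPm, hsmooth⟩ := hmemS m hm
      have hm1 : 1 ≤ m := by omega
      have hmpos : (0:ℝ) < m := by exact_mod_cast hm1
      have hsm : m ∈ Nat.smoothNumbers (P + 1) := by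
        rw [Nat.mem_smoothNumbers]
        refine ⟨by omega, fun p hp => ?_⟩
        have := hsmooth p (Nat.prime_of_mem_primeFactorsList hp)
          (Nat.dvd_of_mem_primeFactorsList hp)
        omega
      rw [Set.indicator_of_mem hsm]
      unfold ww
      rw [hcdef, Set.indicator_of_mem hm]
      calc ‖b m‖ * (m:ℝ) ^ (-σ)
          ≤ (Cd * (m:ℝ) ^ δ) * (m:ℝ) ^ (-σ) := by
            apply mul_le_mul_of_nonneg_right ((hb m hm1).trans (hCd m hm1))
              (Real.rpow_nonneg hmpos.le _)
        _ = Cd * (m:ℝ) ^ (-(σ - δ)) := by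
            rw [mul_assoc, ← Real.rpow_add hmpos, show δ + -σ = -(σ - δ) by ring]
    · have h0 : ww σ c m = 0 := by
        unfold ww
        rw [hcdef, Set.indicator_of_notMem hm]
        simp
      rw [h0]
      apply mul_nonneg (by linarith)
      apply Set.indicator_nonneg
      intro a _
      exact Real.rpow_nonneg (Nat.cast_nonneg a) _
  have hw : Summable (ww σ c) :=
    Summable.of_nonneg_of_le (ww_nonneg σ c) hwle
      ((summable_smooth_rpow hσδ (P + 1)).mul_left Cd)
  have hT := mean_value σ hσ0.ne' c hw
  rw [hfun, hT.limsup_eq]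
  -- final bound on the diagonal sum
  set e : ℝ := 1 - 2 * σ + 3 * δ with hedef
  have hele : e ≤ 0 := by rw [hedef]; linarith
  have maj : ∀ m : ℕ, (ww σ c m) ^ 2 ≤ (Cd ^ 2 * (P:ℝ) ^ e) * (m:ℝ) ^ (-(1 + δ)) := by
    intro m
    by_cases hm : m ∈ S
    · obtain ⟨hPm, hsmooth⟩ := hmemS m hm
      have hm1 : 1 ≤ m := by omega
      have hmpos : (0:ℝ) < m := by exact_mod_cast hm1
      have hPmR : (P:ℝ) ≤ (m:ℝ) := by exact_mod_cast hPm.le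
      have h1 : ww σ c m ≤ Cd * (m:ℝ) ^ (-(σ - δ)) := by
        unfold ww
        rw [hcdef, Set.indicator_of_mem hm]
        calc ‖b m‖ * (m:ℝ) ^ (-σ)
            ≤ (Cd * (m:ℝ) ^ δ) * (m:ℝ) ^ (-σ) := by
              apply mul_le_mul_of_nonneg_right ((hb m hm1).trans (hCd m hm1))
                (Real.rpow_nonneg hmpos.le _)
          _ = Cd * (m:ℝ) ^ (-(σ - δ)) := by
              rw [mul_assoc, ← Real.rpow_add hmpos, show δ + -σ = -(σ - δ) by ring]
      calc (ww σ c m) ^ 2 ≤ (Cd * (m:ℝ) ^ (-(σ - δ))) ^ 2 :=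
            pow_le_pow_left₀ (ww_nonneg σ c m) h1 2
        _ = Cd ^ 2 * ((m:ℝ) ^ e * (m:ℝ) ^ (-(1 + δ))) := by
            rw [mul_pow, ← Real.rpow_natCast ((m:ℝ) ^ (-(σ - δ))) 2,
              ← Real.rpow_mul hmpos.le, ← Real.rpow_add hmpos]
            congr 2
            rw [hedef]
            push_cast
            ring
        _ ≤ Cd ^ 2 * ((P:ℝ) ^ e * (m:ℝ) ^ (-(1 + δ))) := by
            apply mul_le_mul_of_nonneg_left _ (by positivity)
            apply mul_le_mul_of_nonneg_right
              (Real.rpow_le_rpow_of_nonpos hP0 hPmR hele)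
              (Real.rpow_nonneg hmpos.le _)
        _ = (Cd ^ 2 * (P:ℝ) ^ e) * (m:ℝ) ^ (-(1 + δ)) := by ring
    · have h0 : ww σ c m = 0 := by
        unfold ww
        rw [hcdef, Set.indicator_of_notMem hm]
        simp
      rw [h0]
      have : (0:ℝ) ^ 2 = 0 := by norm_num
      rw [this]
      positivity
  have hsummaj : Summable (fun m : ℕ => (Cd ^ 2 * (P:ℝ) ^ e) * (m:ℝ) ^ (-(1 + δ))) :=
    hsum1.mul_left _
  have hL : (∑' m : ℕ, (ww σ c m) ^ 2) ≤ (Cd ^ 2 * (P:ℝ) ^ e) * Z := by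
    rw [hZdef, ← tsum_mul_left]
    exact Summable.tsum_le_tsum maj
      (Summable.of_nonneg_of_le (fun m => sq_nonneg _) maj hsummaj) hsummaj
  apply hL.trans
  have hPe : (P:ℝ) ^ e ≤ (P:ℝ) ^ (1 - 2 * σ + ε) := by
    apply Real.rpow_le_rpow_of_exponent_le hP1
    rw [hedef]
    linarith
  calc (Cd ^ 2 * (P:ℝ) ^ e) * Z ≤ (Cd ^ 2 * (P:ℝ) ^ (1 - 2 * σ + ε)) * Z := by
        apply mul_le_mul_of_nonneg_right _ hZ0
        apply mul_le_mul_of_nonneg_left hPe (by positivity)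
    _ = Cd ^ 2 * Z * (P:ℝ) ^ (1 - 2 * σ + ε) := by ring
end
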